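/- arXiv:1204.2892 — 4 statements merged into one kernel-verified Lean document; each statement's English description precedes it below -/
import Mathlib

section
/- Let r ≥ 1 be a real number and let Y_1, …, Y_n be independent real-valued random variables on a probability space with E[Y_i] = 0 and E[|Y_i|^{2r}] < ∞ for each i. Then there exists a constant C_r, depending only on r, such that E[|∑_{i=1}^n Y_i|^{2r}] ≤ C_r · max{ ∑_{i=1}^n E[|Y_i|^{2r}], (∑_{i=1}^n E[|Y_i|^2])^r }. -/
open MeasureTheory ProbabilityTheory Set
open scoped ENNReal NNReal

open MeasureTheory ProbabilityTheory Set

/-- Derivative of `φ(x) = |x|^(p-2) * x`. -/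
lemma hasDerivAt_abs_rpow_mul_self {p : ℝ} (hp : 2 ≤ p) (x : ℝ) :
    HasDerivAt (fun y => |y| ^ (p - 2) * y) ((p - 1) * |x| ^ (p - 2)) x := by
  rcases lt_trichotomy x 0 with hx | rfl | hx
  · have hne : -x ≠ 0 := neg_ne_zero.mpr (ne_of_lt hx)
    have h1 : HasDerivAt (fun y : ℝ => (-y) ^ (p - 2) * y)
        (((p - 2) * (-x) ^ (p - 2 - 1) * (-1)) * x + (-x) ^ (p - 2) * 1) x := by
      have h2 : HasDerivAt (fun y : ℝ => (-y) ^ (p - 2))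
          ((p - 2) * (-x) ^ (p - 2 - 1) * (-1)) x :=
        (Real.hasDerivAt_rpow_const (p := p - 2) (Or.inl hne)).comp x (hasDerivAt_neg x)
      exact h2.mul (hasDerivAt_id x)
    have h3 : (fun y : ℝ => |y| ^ (p - 2) * y) =ᶠ[nhds x] fun y : ℝ => (-y) ^ (p - 2) * y := by
      filter_upwards [eventually_lt_nhds hx] with y hy
      rw [abs_of_neg hy]
    have h4 : ((p - 2) * (-x) ^ (p - 2 - 1) * (-1)) * x + (-x) ^ (p - 2) * 1
        = (p - 1) * |x| ^ (p - 2) := by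
      rw [abs_of_neg hx]
      have : (-x) ^ (p - 2 - 1) * (-x) = (-x) ^ (p - 2) := by
        rw [← Real.rpow_add_one hne]; ring_nf
      nlinarith [this]
    exact h4 ▸ h1.congr_of_eventuallyEq h3
  · -- x = 0
    rcases eq_or_lt_of_le hp with hp2 | hp2
    · have : (fun y : ℝ => |y| ^ (p - 2) * y) = fun y : ℝ => y := by
        funext y; rw [← hp2]; norm_num [Real.rpow_zero]
      rw [this]
      have : (p - 1) * |(0:ℝ)| ^ (p - 2) = 1 := by rw [← hp2]; norm_num [Real.rpow_zero]
      rw [this]; exact hasDerivAt_id 0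
    · have hval : (p - 1) * |(0:ℝ)| ^ (p - 2) = 0 := by
        rw [abs_zero, Real.zero_rpow (by linarith), mul_zero]
      rw [hval, hasDerivAt_iff_tendsto_slope]
      have h1 : Filter.Tendsto (fun y : ℝ => |y| ^ (p - 2)) (nhds 0) (nhds 0) := by
        have := (continuous_abs.continuousAt (x := (0:ℝ))).rpow_const (p := p - 2)
          (Or.inr (by linarith))
        rw [ContinuousAt] at this
        simpa [abs_zero, Real.zero_rpow (show p - 2 ≠ 0 by linarith)] using this
      refine Filter.Tendsto.congr' ?_ (h1.mono_left nhdsWithin_le_nhds)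
      filter_upwards [self_mem_nhdsWithin] with y hy
      have hy0 : y ≠ 0 := hy
      simp [slope_def_field, mul_div_assoc, div_self hy0, Real.rpow_zero]
  · have hne : x ≠ 0 := ne_of_gt hx
    have h1 : HasDerivAt (fun y : ℝ => y ^ (p - 2) * y)
        ((p - 2) * x ^ (p - 2 - 1) * x + x ^ (p - 2) * 1) x :=
      (Real.hasDerivAt_rpow_const (p := p - 2) (Or.inl hne)).mul (hasDerivAt_id x)
    have h3 : (fun y : ℝ => |y| ^ (p - 2) * y) =ᶠ[nhds x] fun y : ℝ => y ^ (p - 2) * y := by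
      filter_upwards [eventually_gt_nhds hx] with y hy
      rw [abs_of_pos hy]
    have h4 : (p - 2) * x ^ (p - 2 - 1) * x + x ^ (p - 2) * 1 = (p - 1) * |x| ^ (p - 2) := by
      rw [abs_of_pos hx]
      have : x ^ (p - 2 - 1) * x = x ^ (p - 2) := by
        rw [← Real.rpow_add_one hne]; ring_nf
      nlinarith [this]
    exact h4 ▸ h1.congr_of_eventuallyEq h3



lemma phi_lipschitz {p : ℝ} (hp : 2 ≤ p) {R : ℝ} {x y : ℝ}
    (hx : |x| ≤ R) (hy : |y| ≤ R) :
    |(|x| ^ (p - 2) * x) - (|y| ^ (p - 2) * y)| ≤ (p - 1) * R ^ (p - 2) * |x - y| := by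
  have hR : 0 ≤ R := le_trans (abs_nonneg x) hx
  have := Convex.norm_image_sub_le_of_norm_hasDerivWithin_le
    (f := fun z : ℝ => |z| ^ (p - 2) * z) (f' := fun z : ℝ => (p - 1) * |z| ^ (p - 2))
    (s := Set.Icc (-R) R) (C := (p - 1) * R ^ (p - 2))
    (fun z _ => (hasDerivAt_abs_rpow_mul_self hp z).hasDerivWithinAt)
    (fun z hz => by
      have hz' : |z| ≤ R := abs_le.mpr ⟨hz.1, hz.2⟩
      have h1 : (0:ℝ) ≤ (p - 1) * |z| ^ (p - 2) :=
        mul_nonneg (by linarith) (Real.rpow_nonneg (abs_nonneg z) _)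
      rw [Real.norm_eq_abs, abs_of_nonneg h1]
      exact mul_le_mul_of_nonneg_left
        (Real.rpow_le_rpow (abs_nonneg z) hz' (by linarith)) (by linarith))
    (convex_Icc _ _) (abs_le.mp hy) (abs_le.mp hx)
  simpa [Real.norm_eq_abs] using this

lemma abs_rpow_mul_sq_le {p : ℝ} (hp : 2 ≤ p) (b : ℝ) :
    |b| ^ (p - 2) * b ^ 2 = |b| ^ p := by
  rcases eq_or_ne b 0 with rfl | hb
  · rw [abs_zero, Real.zero_rpow (show p ≠ 0 by linarith)]
    norm_num
  · have hb' : (0:ℝ) < |b| := abs_pos.mpr hb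
    have h2 : b ^ 2 = |b| ^ ((2:ℕ) : ℝ) := by
      rw [Real.rpow_natCast, sq_abs]
    rw [h2, ← Real.rpow_add hb']
    norm_num

lemma key_pointwise {p : ℝ} (hp : 2 ≤ p) (a b : ℝ) :
    |a + b| ^ p ≤ |a| ^ p + p * (|a| ^ (p - 2) * a) * b
      + (p * (p - 1) * 2 ^ (p - 2)) * (|a| ^ (p - 2) * b ^ 2 + |b| ^ p) := by
  have hp1 : (1:ℝ) < p := lt_of_lt_of_le one_lt_two hp
  set R := |a| + |b| with hRdef
  have hR : 0 ≤ R := by positivity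
  set c : ℝ := p * (|a| ^ (p - 2) * a) * b with hcdef
  have hderiv : ∀ t ∈ Set.Icc (0:ℝ) 1, HasDerivWithinAt
      (fun t : ℝ => |a + t * b| ^ p - t * c)
      ((p * |a + t * b| ^ (p - 2) * (a + t * b)) * b - c) (Set.Icc 0 1) t := by
    intro t _
    have h1 : HasDerivAt (fun t : ℝ => a + t * b) b t := by
      simpa using ((hasDerivAt_id t).mul_const b).const_add a
    have h2 := (hasDerivAt_abs_rpow (a + t * b) hp1).comp t h1
    have h3 := (h2.sub ((hasDerivAt_id t).mul_const c)).hasDerivWithinAt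
      (s := Set.Icc (0:ℝ) 1)
    rw [one_mul] at h3
    exact h3
  have hbound : ∀ t ∈ Set.Ico (0:ℝ) 1,
      ‖(p * |a + t * b| ^ (p - 2) * (a + t * b)) * b - c‖
        ≤ p * (p - 1) * R ^ (p - 2) * b ^ 2 := by
    intro t ht
    have ht0 := ht.1
    have ht1 := ht.2.le
    have habs : |a + t * b| ≤ R := by
      calc |a + t * b| ≤ |a| + |t * b| := abs_add_le _ _
        _ ≤ |a| + |b| := by
            rw [abs_mul, abs_of_nonneg ht0]
            nlinarith [abs_nonneg b]
    have key := phi_lipschitz hp habs (le_add_of_nonneg_right (abs_nonneg b) : |a| ≤ R)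
    have hsub : (a + t * b) - a = t * b := by ring
    rw [hsub] at key
    have : (p * |a + t * b| ^ (p - 2) * (a + t * b)) * b - c
        = p * b * ((|a + t * b| ^ (p - 2) * (a + t * b)) - (|a| ^ (p - 2) * a)) := by
      rw [hcdef]; ring
    rw [this, Real.norm_eq_abs, abs_mul]
    have h3 : |p * b| = p * |b| := by
      rw [abs_mul, abs_of_nonneg (by linarith : (0:ℝ) ≤ p)]
    rw [h3]
    calc p * |b| * |(|a + t * b| ^ (p - 2) * (a + t * b)) - (|a| ^ (p - 2) * a)|
        ≤ p * |b| * ((p - 1) * R ^ (p - 2) * |t * b|) := by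
          exact mul_le_mul_of_nonneg_left key
            (mul_nonneg (by linarith : (0:ℝ) ≤ p) (abs_nonneg b))
      _ ≤ p * |b| * ((p - 1) * R ^ (p - 2) * |b|) := by
          apply mul_le_mul_of_nonneg_left _
            (mul_nonneg (by linarith : (0:ℝ) ≤ p) (abs_nonneg b))
          apply mul_le_mul_of_nonneg_left _
            (mul_nonneg (by linarith : (0:ℝ) ≤ p - 1)
              (Real.rpow_nonneg hR _))
          rw [abs_mul, abs_of_nonneg ht0]
          nlinarith [abs_nonneg b]
      _ = p * (p - 1) * R ^ (p - 2) * b ^ 2 := by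
          rw [← sq_abs b]; ring
  have hMVT := norm_image_sub_le_of_norm_deriv_le_segment_01' hderiv hbound
  simp only [one_mul, zero_mul, add_zero, sub_zero, mul_zero, mul_one] at hMVT
  rw [Real.norm_eq_abs] at hMVT
  have hmain : |a + b| ^ p - |a| ^ p - c ≤ p * (p - 1) * R ^ (p - 2) * b ^ 2 := by
    have := (abs_le.mp hMVT).2
    linarith
  have hRbound : R ^ (p - 2) * b ^ 2 ≤ 2 ^ (p - 2) * (|a| ^ (p - 2) * b ^ 2 + |b| ^ p) := by
    have hM : R ≤ 2 * max |a| |b| := by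
      rcases max_cases |a| |b| with ⟨h, h'⟩ | ⟨h, h'⟩ <;> rw [h] <;> simp [hRdef] <;> linarith
    have hMnn : (0:ℝ) ≤ max |a| |b| := le_max_of_le_left (abs_nonneg a)
    have h1 : R ^ (p - 2) ≤ (2 * max |a| |b|) ^ (p - 2) :=
      Real.rpow_le_rpow hR hM (by linarith)
    have h2 : (2 * max |a| |b|) ^ (p - 2) = 2 ^ (p - 2) * (max |a| |b|) ^ (p - 2) :=
      Real.mul_rpow (by norm_num) hMnn
    have h3 : (max |a| |b|) ^ (p - 2) * b ^ 2 ≤ |a| ^ (p - 2) * b ^ 2 + |b| ^ p := by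
      rcases max_cases |a| |b| with ⟨h, _⟩ | ⟨h, _⟩ <;> rw [h]
      · nlinarith [Real.rpow_nonneg (abs_nonneg b) p]
      · rw [abs_rpow_mul_sq_le hp b]
        nlinarith [Real.rpow_nonneg (abs_nonneg a) (p - 2), sq_nonneg b]
    calc R ^ (p - 2) * b ^ 2 ≤ (2 * max |a| |b|) ^ (p - 2) * b ^ 2 := by nlinarith [sq_nonneg b]
      _ = 2 ^ (p - 2) * ((max |a| |b|) ^ (p - 2) * b ^ 2) := by rw [h2]; ring
      _ ≤ 2 ^ (p - 2) * (|a| ^ (p - 2) * b ^ 2 + |b| ^ p) := by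
          apply mul_le_mul_of_nonneg_left h3 (by positivity)
  have hfinal : p * (p - 1) * R ^ (p - 2) * b ^ 2
      ≤ (p * (p - 1) * 2 ^ (p - 2)) * (|a| ^ (p - 2) * b ^ 2 + |b| ^ p) := by
    have hpp : (0:ℝ) ≤ p * (p - 1) := by nlinarith
    calc p * (p - 1) * R ^ (p - 2) * b ^ 2 = p * (p - 1) * (R ^ (p - 2) * b ^ 2) := by ring
      _ ≤ p * (p - 1) * (2 ^ (p - 2) * (|a| ^ (p - 2) * b ^ 2 + |b| ^ p)) :=
          mul_le_mul_of_nonneg_left hRbound hpp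
      _ = (p * (p - 1) * 2 ^ (p - 2)) * (|a| ^ (p - 2) * b ^ 2 + |b| ^ p) := by ring
  linarith


variable {Ω : Type} [MeasurableSpace Ω] {P : Measure Ω}

lemma memLp_of_integrable_abs_rpow [IsProbabilityMeasure P] {f : Ω → ℝ} {p : ℝ} (hp : 0 < p)
    (hmeas : Measurable f) (hint : Integrable (fun ω => |f ω| ^ p) P) :
    MemLp f (ENNReal.ofReal p) P := by
  have hne : ENNReal.ofReal p ≠ 0 := ne_of_gt (ENNReal.ofReal_pos.mpr hp)
  have hnetop : ENNReal.ofReal p ≠ ⊤ := ENNReal.ofReal_ne_top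
  apply (memLp_norm_rpow_iff (q := ENNReal.ofReal p) hmeas.aestronglyMeasurable hne hnetop).mp
  rw [ENNReal.div_self hne hnetop]
  rw [memLp_one_iff_integrable]
  simpa [Real.norm_eq_abs, ENNReal.toReal_ofReal hp.le] using hint

lemma integrable_abs_rpow_of_memLp [IsProbabilityMeasure P] {f : Ω → ℝ} {p q : ℝ}
    (hq0 : 0 ≤ q) (hqp : q ≤ p) (hf : MemLp f (ENNReal.ofReal p) P) :
    Integrable (fun ω => |f ω| ^ q) P := by
  rcases eq_or_lt_of_le hq0 with hq | hq
  · have : (fun ω => |f ω| ^ q) = fun _ => (1:ℝ) := by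
      funext ω; rw [← hq, Real.rpow_zero]
    rw [this]; exact integrable_const 1
  · have h1 : MemLp f (ENNReal.ofReal q) P :=
      hf.mono_exponent (ENNReal.ofReal_le_ofReal hqp)
    have h2 := h1.integrable_norm_rpow (ne_of_gt (ENNReal.ofReal_pos.mpr hq))
      ENNReal.ofReal_ne_top
    simpa [Real.norm_eq_abs, ENNReal.toReal_ofReal hq0] using h2

lemma integral_abs_rpow_eq_toReal_lintegral {f : Ω → ℝ} {q : ℝ} (hq : 0 ≤ q)
    (hf : AEStronglyMeasurable f P) :
    ∫ ω, |f ω| ^ q ∂P = (∫⁻ ω, (‖f ω‖₊ : ℝ≥0∞) ^ q ∂P).toReal := by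
  rw [integral_eq_lintegral_of_nonneg_ae
      (Filter.Eventually.of_forall fun ω => Real.rpow_nonneg (abs_nonneg _) q)
      ((hf.norm.aemeasurable.pow_const q).congr
        (Filter.Eventually.of_forall fun ω => by
          simp [Real.norm_eq_abs])).aestronglyMeasurable]
  congr 1
  apply lintegral_congr fun ω => ?_
  rw [← ENNReal.ofReal_rpow_of_nonneg (abs_nonneg _) hq]
  congr 1
  exact (Real.enorm_eq_ofReal_abs _).symm

/-- Lyapunov's inequality on a probability space. -/
lemma lyapunov [IsProbabilityMeasure P] {f : Ω → ℝ} {p q : ℝ}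
    (hq0 : 0 ≤ q) (hqp : q ≤ p) (hp : 0 < p) (hf : MemLp f (ENNReal.ofReal p) P) :
    ∫ ω, |f ω| ^ q ∂P ≤ (∫ ω, |f ω| ^ p ∂P) ^ (q / p) := by
  rcases eq_or_lt_of_le hq0 with hq | hq
  · simp only [← hq, Real.rpow_zero, zero_div]
    simp [measure_univ]
  -- notation
  set Lq : ℝ≥0∞ := ∫⁻ ω, (‖f ω‖₊ : ℝ≥0∞) ^ q ∂P with hLq
  set Lp : ℝ≥0∞ := ∫⁻ ω, (‖f ω‖₊ : ℝ≥0∞) ^ p ∂P with hLp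
  have hqne : ENNReal.ofReal q ≠ 0 := ne_of_gt (ENNReal.ofReal_pos.mpr hq)
  have hpne : ENNReal.ofReal p ≠ 0 := ne_of_gt (ENNReal.ofReal_pos.mpr hp)
  have hNq : eLpNorm f (ENNReal.ofReal q) P = Lq ^ (1 / q) := by
    rw [eLpNorm_eq_lintegral_rpow_enorm_toReal hqne ENNReal.ofReal_ne_top,
      ENNReal.toReal_ofReal hq0]
    rfl
  have hNp : eLpNorm f (ENNReal.ofReal p) P = Lp ^ (1 / p) := by
    rw [eLpNorm_eq_lintegral_rpow_enorm_toReal hpne ENNReal.ofReal_ne_top,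
      ENNReal.toReal_ofReal hp.le]
    rfl
  have hmono := eLpNorm_le_eLpNorm_of_exponent_le (μ := P)
    (ENNReal.ofReal_le_ofReal hqp) hf.aestronglyMeasurable
  rw [hNq, hNp] at hmono
  have hLqLp : Lq ≤ Lp ^ (q / p) := by
    have h1 := ENNReal.rpow_le_rpow hmono hq0
    rwa [← ENNReal.rpow_mul, ← ENNReal.rpow_mul, one_div_mul_cancel (ne_of_gt hq),
      ENNReal.rpow_one, one_div, inv_mul_eq_div] at h1
  have hLptop : Lp ≠ ⊤ := by
    have h2 := hf.2
    rw [hNp] at h2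
    intro h
    rw [h] at h2
    simp [ENNReal.top_rpow_of_pos (show (0:ℝ) < p⁻¹ by positivity),
      one_div] at h2
  have hRtop : Lp ^ (q / p) ≠ ⊤ := by
    exact (ENNReal.rpow_lt_top_of_nonneg (by positivity) hLptop).ne
  rw [integral_abs_rpow_eq_toReal_lintegral hq0 hf.aestronglyMeasurable,
    integral_abs_rpow_eq_toReal_lintegral hp.le hf.aestronglyMeasurable]
  calc Lq.toReal ≤ (Lp ^ (q / p)).toReal := ENNReal.toReal_mono hRtop hLqLp
    _ = Lp.toReal ^ (q / p) := (ENNReal.toReal_rpow _ _).symm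


lemma abs_phi {p : ℝ} (hp : 2 ≤ p) (x : ℝ) : |(|x| ^ (p - 2) * x)| = |x| ^ (p - 1) := by
  rw [abs_mul, abs_of_nonneg (Real.rpow_nonneg (abs_nonneg x) _)]
  rcases eq_or_ne x 0 with rfl | hx
  · rw [abs_zero, Real.zero_rpow (show p - 1 ≠ 0 by intro h; linarith), mul_zero]
  · rw [← Real.rpow_add_one (abs_ne_zero.mpr hx)]
    ring_nf

lemma sq_eq_abs_rpow (x : ℝ) : |x| ^ (2:ℝ) = x ^ 2 := by
  rw [show ((2:ℝ)) = ((2:ℕ):ℝ) by norm_num, Real.rpow_natCast, sq_abs]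

lemma final_algebra {M V T K r p : ℝ} (hK : 1 ≤ K) (hM0 : 0 ≤ M) (hV : 0 ≤ V) (hT : 0 ≤ T)
    (hp : 2 ≤ p) (hrp : p = 2 * r)
    (hle : M ≤ K * (M ^ ((p - 2) / p) * V + T)) :
    M ≤ max (2 * K) ((2 * K) ^ r) * max T (V ^ r) := by
  have hp0 : (0:ℝ) < p := by linarith
  have hr1 : 1 ≤ r := by nlinarith
  set e : ℝ := (p - 2) / p with hedef
  have he0 : 0 ≤ e := div_nonneg (by linarith) hp0.le
  have hD0 : 0 ≤ max T (V ^ r) := le_trans hT (le_max_left _ _)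
  have hC2K : 2 * K ≤ max (2 * K) ((2 * K) ^ r) := le_max_left _ _
  have h2K0 : (0:ℝ) < 2 * K := by linarith
  by_cases hcase : K * (M ^ e * V) ≤ M / 2
  · -- M ≤ M/2 + K*T  ⇒  M ≤ 2*K*T
    have h1 : M ≤ M / 2 + K * T := by nlinarith
    have h2 : M ≤ 2 * K * T := by linarith
    calc M ≤ 2 * K * T := h2
      _ ≤ max (2 * K) ((2 * K) ^ r) * max T (V ^ r) := by
          apply mul_le_mul hC2K (le_max_left _ _) hT
          exact le_trans h2K0.le hC2K
  · push_neg at hcase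
    rcases eq_or_lt_of_le hM0 with hM | hM
    · rw [← hM]
      positivity
    -- M < 2 * K * M^e * V, cancel M^e
    have hMe0 : (0:ℝ) < M ^ e := Real.rpow_pos_of_pos hM _
    have h1 : M < 2 * K * (M ^ e * V) := by linarith
    have hsplit : M = M ^ e * M ^ (2 / p) := by
      rw [← Real.rpow_add hM, hedef,
        show (p - 2) / p + 2 / p = 1 by field_simp; ring, Real.rpow_one]
    have h2 : M ^ (2 / p) < 2 * K * V := by
      have h3 : M ^ e * M ^ (2 / p) < M ^ e * (2 * K * V) := by
        calc M ^ e * M ^ (2 / p) = M := hsplit.symm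
          _ < 2 * K * (M ^ e * V) := h1
          _ = M ^ e * (2 * K * V) := by ring
      exact lt_of_mul_lt_mul_left h3 hMe0.le
    have hr0 : (0:ℝ) < r := by linarith
    have hMre : M = (M ^ (2 / p)) ^ r := by
      rw [← Real.rpow_mul hM0]
      have hx : 2 / p * r = 1 := by
        rw [hrp]
        field_simp
      rw [hx, Real.rpow_one]
    have h4 : M < (2 * K * V) ^ r := by
      calc M = (M ^ (2 / p)) ^ r := hMre
        _ < (2 * K * V) ^ r :=
            Real.rpow_lt_rpow (Real.rpow_nonneg hM0 _) h2 hr0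
    have h5 : (2 * K * V) ^ r = (2 * K) ^ r * V ^ r := Real.mul_rpow h2K0.le hV
    calc M ≤ (2 * K) ^ r * V ^ r := by rw [← h5]; exact h4.le
      _ ≤ max (2 * K) ((2 * K) ^ r) * max T (V ^ r) :=
          mul_le_mul (le_max_right _ _) (le_max_right _ _)
            (Real.rpow_nonneg hV r)
            (le_trans h2K0.le hC2K)

/-- **Rosenthal's inequality.** For every real `r ≥ 1` there is a constant `C_r`,
depending only on `r`, such that for any independent centered real random variables
`Y 1, …, Y n` with finite `2r`-th absolute moments,
`E[|∑ Y i|^{2r}] ≤ C_r * max (∑ E[|Y i|^{2r}]) ((∑ E[|Y i|^2])^r)`. -/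
theorem rosenthal_inequality (r : ℝ) (hr : 1 ≤ r) :
    ∃ C : ℝ, ∀ (Ω : Type) (mΩ : MeasurableSpace Ω) (P : Measure Ω),
      IsProbabilityMeasure P →
      ∀ (n : ℕ) (Y : Fin n → Ω → ℝ),
        (∀ i, Measurable (Y i)) →
        iIndepFun Y P →
        (∀ i, ∫ ω, Y i ω ∂P = 0) →
        (∀ i, Integrable (fun ω => |Y i ω| ^ (2 * r)) P) →
        ∫ ω, |∑ i, Y i ω| ^ (2 * r) ∂P ≤
          C * max (∑ i, ∫ ω, |Y i ω| ^ (2 * r) ∂P)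
            ((∑ i, ∫ ω, |Y i ω| ^ (2 : ℝ) ∂P) ^ r) := by
  set p : ℝ := 2 * r with hpdef
  have hp : 2 ≤ p := by rw [hpdef]; linarith
  have hp0 : (0:ℝ) < p := by linarith
  set K0 : ℝ := p * (p - 1) * 2 ^ (p - 2) with hK0def
  have hK00 : 0 ≤ K0 := by
    have h2 : (0:ℝ) ≤ (2:ℝ) ^ (p - 2) := Real.rpow_nonneg (by norm_num) _
    rw [hK0def]
    exact mul_nonneg (mul_nonneg (by linarith) (by linarith)) h2
  set K : ℝ := K0 + 1 with hKdef
  have hK1 : 1 ≤ K := by rw [hKdef]; linarith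
  have hK0K : K0 ≤ K := by rw [hKdef]; linarith
  refine ⟨max (2 * K) ((2 * K) ^ r), ?_⟩
  intro Ω mΩ P hP n Y hmeas hindep hmean hint
  -- basic Lp membership
  have hYp : ∀ i, MemLp (Y i) (ENNReal.ofReal p) P := fun i =>
    memLp_of_integrable_abs_rpow hp0 (hmeas i) (hint i)
  set e : ℝ := (p - 2) / p with hedef
  have he0 : 0 ≤ e := div_nonneg (by linarith) hp0.le
  -- partial sums
  set s : ℕ → Finset (Fin n) := fun k => Finset.univ.filter (fun i => (i:ℕ) < k) with hsdef
  set S : ℕ → Ω → ℝ := fun k ω => ∑ i ∈ s k, Y i ω with hSdef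
  have hSmeas : ∀ k, Measurable (S k) := fun k =>
    Finset.measurable_sum _ (fun i _ => hmeas i)
  have hSp : ∀ k, MemLp (S k) (ENNReal.ofReal p) P := fun k =>
    memLp_finsetSum _ (fun i _ => hYp i)
  set A : ℕ → ℝ := fun k => ∫ ω, |S k ω| ^ p ∂P with hAdef
  have hA0 : ∀ k, 0 ≤ A k := fun k =>
    integral_nonneg fun ω => Real.rpow_nonneg (abs_nonneg _) _
  set t : Fin n → ℝ := fun i => ∫ ω, |Y i ω| ^ p ∂P with htdef
  set v : Fin n → ℝ := fun i => ∫ ω, |Y i ω| ^ (2:ℝ) ∂P with hvdef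
  have ht0 : ∀ i, 0 ≤ t i := fun i =>
    integral_nonneg fun ω => Real.rpow_nonneg (abs_nonneg _) _
  have hv0 : ∀ i, 0 ≤ v i := fun i =>
    integral_nonneg fun ω => Real.rpow_nonneg (abs_nonneg _) _
  have hs_succ : ∀ (k : ℕ) (hk : k < n), s (k+1) = insert ⟨k, hk⟩ (s k) := by
    intro k hk
    ext j
    simp only [hsdef, Finset.mem_filter, Finset.mem_univ, true_and, Finset.mem_insert,
      Nat.lt_succ_iff_lt_or_eq, Fin.ext_iff]
    tauto
  have hiS : ∀ (k : ℕ) (hk : k < n), (⟨k, hk⟩ : Fin n) ∉ s k := by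
    intro k hk
    simp [hsdef]
  -- measurability on ℝ
  have mpow : ∀ c : ℝ, 0 ≤ c → Measurable (fun x : ℝ => |x| ^ c) := fun c hc =>
    ((Real.continuous_rpow_const hc).comp continuous_abs).measurable
  have mphi : Measurable (fun x : ℝ => |x| ^ (p - 2) * x) :=
    (mpow (p - 2) (by linarith)).mul measurable_id
  have msq : Measurable (fun x : ℝ => x ^ 2) := (continuous_pow 2).measurable
  -- The key one-step estimate
  have hstep : ∀ (k : ℕ) (hk : k < n),
      A (k+1) ≤ A k + K * ((A k) ^ e * v ⟨k, hk⟩ + t ⟨k, hk⟩) := by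
    intro k hk
    set i : Fin n := ⟨k, hk⟩ with hidef
    have hInd : IndepFun (S k) (Y i) P := by
      have h1 := hindep.indepFun_finsetSum_of_notMem hmeas (hiS k hk)
      have h2 : S k = ∑ j ∈ s k, Y j := by
        funext ω; rw [hSdef]; simp [Finset.sum_apply]
      rwa [← h2] at h1
    have hSsucc : ∀ ω, S (k+1) ω = S k ω + Y i ω := by
      intro ω
      rw [hSdef]
      simp only
      rw [hs_succ k hk, Finset.sum_insert (hiS k hk)]
      ring
    -- integrabilities
    have hXint : Integrable (Y i) P :=
      (hYp i).integrable (by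
        simpa using ENNReal.ofReal_le_ofReal (show (1:ℝ) ≤ p by linarith))
    have hphiS_int : Integrable (fun ω => |S k ω| ^ (p - 2) * S k ω) P := by
      have hb : Integrable (fun ω => |S k ω| ^ (p - 1)) P :=
        integrable_abs_rpow_of_memLp (by linarith) (by linarith) (hSp k)
      refine hb.mono' ((mphi.comp (hSmeas k)).aestronglyMeasurable) ?_
      exact Filter.Eventually.of_forall fun ω => by
        rw [Real.norm_eq_abs]; exact le_of_eq (abs_phi hp _)
    have hg2_int : Integrable (fun ω => (|S k ω| ^ (p - 2) * S k ω) * Y i ω) P := by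
      have h1 := (hInd.comp mphi measurable_id).integrable_mul hphiS_int hXint
      have h2 : ((fun x : ℝ => |x| ^ (p - 2) * x) ∘ S k) * ((id : ℝ → ℝ) ∘ Y i)
          = fun ω => (|S k ω| ^ (p - 2) * S k ω) * Y i ω := by
        funext ω; simp [Function.comp]
      rwa [h2] at h1
    have hSp2_int : Integrable (fun ω => |S k ω| ^ (p - 2)) P :=
      integrable_abs_rpow_of_memLp (by linarith) (by linarith) (hSp k)
    have hX2_int : Integrable (fun ω => Y i ω ^ 2) P := by
      have h1 := integrable_abs_rpow_of_memLp (by norm_num) (by linarith : (2:ℝ) ≤ p) (hYp i)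
      exact h1.congr (Filter.Eventually.of_forall fun ω => sq_eq_abs_rpow _)
    have hg3_int : Integrable (fun ω => |S k ω| ^ (p - 2) * Y i ω ^ 2) P := by
      have h1 := (hInd.comp (mpow (p - 2) (by linarith)) msq).integrable_mul hSp2_int hX2_int
      have h2 : ((fun x : ℝ => |x| ^ (p - 2)) ∘ S k) * ((fun x : ℝ => x ^ 2) ∘ Y i)
          = fun ω => |S k ω| ^ (p - 2) * Y i ω ^ 2 := by
        funext ω; simp [Function.comp]
      rwa [h2] at h1
    have hg4_int : Integrable (fun ω => |Y i ω| ^ p) P := hint i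
    have hSkp_int : Integrable (fun ω => |S k ω| ^ p) P :=
      integrable_abs_rpow_of_memLp hp0.le le_rfl (hSp k)
    have hSk1p_int : Integrable (fun ω => |S (k+1) ω| ^ p) P :=
      integrable_abs_rpow_of_memLp hp0.le le_rfl (hSp (k+1))
    -- pointwise bound
    have hpoint : ∀ ω, |S (k+1) ω| ^ p ≤ |S k ω| ^ p
        + p * ((|S k ω| ^ (p - 2) * S k ω) * Y i ω)
        + K0 * (|S k ω| ^ (p - 2) * Y i ω ^ 2 + |Y i ω| ^ p) := by
      intro ω
      rw [hSsucc ω]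
      have h1 := key_pointwise hp (S k ω) (Y i ω)
      rw [mul_assoc] at h1
      exact h1
    -- integrate
    have hRHS_int : Integrable (fun ω => |S k ω| ^ p
        + p * ((|S k ω| ^ (p - 2) * S k ω) * Y i ω)
        + K0 * (|S k ω| ^ (p - 2) * Y i ω ^ 2 + |Y i ω| ^ p)) P :=
      (hSkp_int.add (hg2_int.const_mul p)).add ((hg3_int.add hg4_int).const_mul K0)
    have hmono := integral_mono hSk1p_int hRHS_int hpoint
    have hsplit : ∫ ω, (|S k ω| ^ p
        + p * ((|S k ω| ^ (p - 2) * S k ω) * Y i ω)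
        + K0 * (|S k ω| ^ (p - 2) * Y i ω ^ 2 + |Y i ω| ^ p)) ∂P
        = A k + p * (∫ ω, (|S k ω| ^ (p - 2) * S k ω) * Y i ω ∂P)
          + K0 * ((∫ ω, |S k ω| ^ (p - 2) * Y i ω ^ 2 ∂P) + t i) := by
      have hI12 : Integrable (fun ω => |S k ω| ^ p
          + p * ((|S k ω| ^ (p - 2) * S k ω) * Y i ω)) P :=
        hSkp_int.add (hg2_int.const_mul p)
      have hI34 : Integrable (fun ω =>
          K0 * (|S k ω| ^ (p - 2) * Y i ω ^ 2 + |Y i ω| ^ p)) P :=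
        (hg3_int.add hg4_int).const_mul K0
      have hg34 : Integrable (fun ω =>
          |S k ω| ^ (p - 2) * Y i ω ^ 2 + |Y i ω| ^ p) P := hg3_int.add hg4_int
      rw [integral_add hI12 hI34, integral_add hSkp_int (hg2_int.const_mul p),
        integral_const_mul, integral_const_mul, integral_add hg3_int hg4_int]
    -- the centered cross term vanishes
    have hcross0 : ∫ ω, (|S k ω| ^ (p - 2) * S k ω) * Y i ω ∂P = 0 := by
      have h1 := (hInd.comp mphi measurable_id).integral_mul_eq_mul_integral
        ((mphi.comp (hSmeas k)).aestronglyMeasurable)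
        ((hmeas i).aestronglyMeasurable)
      have h2 : ∫ ω, (|S k ω| ^ (p - 2) * S k ω) * Y i ω ∂P
          = (∫ ω, |S k ω| ^ (p - 2) * S k ω ∂P) * ∫ ω, Y i ω ∂P := by
        simpa [Function.comp] using h1
      rw [h2, hmean i, mul_zero]
    -- the quadratic cross term factors
    have hcross2 : ∫ ω, |S k ω| ^ (p - 2) * Y i ω ^ 2 ∂P
        = (∫ ω, |S k ω| ^ (p - 2) ∂P) * v i := by
      have h1 := (hInd.comp (mpow (p - 2) (by linarith)) msq).integral_mul_eq_mul_integral
        (((mpow (p - 2) (by linarith)).comp (hSmeas k)).aestronglyMeasurable)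
        ((msq.comp (hmeas i)).aestronglyMeasurable)
      have h2 : ∫ ω, |S k ω| ^ (p - 2) * Y i ω ^ 2 ∂P
          = (∫ ω, |S k ω| ^ (p - 2) ∂P) * ∫ ω, Y i ω ^ 2 ∂P := by
        simpa [Function.comp] using h1
      rw [h2, hvdef]
      congr 1
      exact integral_congr_ae (Filter.Eventually.of_forall fun ω => (sq_eq_abs_rpow _).symm)
    -- Lyapunov bound
    have hlyap : ∫ ω, |S k ω| ^ (p - 2) ∂P ≤ (A k) ^ e := by
      have h1 := lyapunov (by linarith : (0:ℝ) ≤ p - 2) (by linarith) hp0 (hSp k)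
      rwa [hedef]
    have hSk2_nonneg : 0 ≤ ∫ ω, |S k ω| ^ (p - 2) ∂P :=
      integral_nonneg fun ω => Real.rpow_nonneg (abs_nonneg _) _
    have hAe0 : 0 ≤ (A k) ^ e := Real.rpow_nonneg (hA0 k) _
    calc A (k+1) ≤ A k + p * (∫ ω, (|S k ω| ^ (p - 2) * S k ω) * Y i ω ∂P)
          + K0 * ((∫ ω, |S k ω| ^ (p - 2) * Y i ω ^ 2 ∂P) + t i) := by
          rw [← hsplit]; exact hmono
      _ = A k + K0 * ((∫ ω, |S k ω| ^ (p - 2) ∂P) * v i + t i) := by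
          rw [hcross0, hcross2]; ring
      _ ≤ A k + K * ((A k) ^ e * v i + t i) := by
          have h1 : (∫ ω, |S k ω| ^ (p - 2) ∂P) * v i ≤ (A k) ^ e * v i :=
            mul_le_mul_of_nonneg_right hlyap (hv0 i)
          have h2 : 0 ≤ (A k) ^ e * v i + t i := by positivity
          have c1 : K0 * ((∫ ω, |S k ω| ^ (p - 2) ∂P) * v i + t i)
              ≤ K0 * ((A k) ^ e * v i + t i) :=
            mul_le_mul_of_nonneg_left (by linarith) hK00
          have c2 : K0 * ((A k) ^ e * v i + t i) ≤ K * ((A k) ^ e * v i + t i) :=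
            mul_le_mul_of_nonneg_right hK0K h2
          linarith
  -- the running maximum
  have hrange_ne : (Finset.range (n+1)).Nonempty := ⟨0, by simp⟩
  set M : ℝ := (Finset.range (n+1)).sup' hrange_ne A with hMdef
  have hAM : ∀ k, k ≤ n → A k ≤ M := fun k hk =>
    Finset.le_sup' A (by simp [Finset.mem_range]; omega)
  have hM0 : 0 ≤ M := le_trans (hA0 0) (hAM 0 (Nat.zero_le n))
  -- cumulative bound by induction
  have hA_zero : A 0 = 0 := by
    have h1 : ∀ ω, S 0 ω = 0 := by
      intro ω; rw [hSdef]; simp [hsdef]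
    have h2 : (fun ω => |S 0 ω| ^ p) = fun _ => (0:ℝ) := by
      funext ω; rw [h1 ω, abs_zero, Real.zero_rpow (ne_of_gt hp0)]
    rw [hAdef]
    simp only [h2, integral_zero]
  have hcum : ∀ m, m ≤ n →
      A m ≤ K * (M ^ e * (∑ j ∈ s m, v j) + ∑ j ∈ s m, t j) := by
    intro m
    induction m with
    | zero =>
      intro _
      rw [hA_zero]
      have h1 : 0 ≤ M ^ e := Real.rpow_nonneg hM0 _
      have h2 : 0 ≤ ∑ j ∈ s 0, v j := Finset.sum_nonneg fun j _ => hv0 j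
      have h3 : 0 ≤ ∑ j ∈ s 0, t j := Finset.sum_nonneg fun j _ => ht0 j
      have h4 : 0 ≤ M ^ e * (∑ j ∈ s 0, v j) := mul_nonneg h1 h2
      exact mul_nonneg (by linarith) (by linarith)
    | succ m ih =>
      intro hm
      have hm' : m < n := hm
      have h1 := ih (le_of_lt hm')
      have h2 : (A m) ^ e ≤ M ^ e := Real.rpow_le_rpow (hA0 m) (hAM m hm'.le) he0
      have h3 : (A m) ^ e * v ⟨m, hm'⟩ ≤ M ^ e * v ⟨m, hm'⟩ :=
        mul_le_mul_of_nonneg_right h2 (hv0 _)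
      calc A (m+1) ≤ A m + K * ((A m) ^ e * v ⟨m, hm'⟩ + t ⟨m, hm'⟩) := hstep m hm'
        _ ≤ K * (M ^ e * (∑ j ∈ s m, v j) + ∑ j ∈ s m, t j)
            + K * (M ^ e * v ⟨m, hm'⟩ + t ⟨m, hm'⟩) := by
            have c1 : K * ((A m) ^ e * v ⟨m, hm'⟩ + t ⟨m, hm'⟩)
                ≤ K * (M ^ e * v ⟨m, hm'⟩ + t ⟨m, hm'⟩) :=
              mul_le_mul_of_nonneg_left (by linarith) (by linarith)
            linarith
        _ = K * (M ^ e * (∑ j ∈ s (m+1), v j) + ∑ j ∈ s (m+1), t j) := by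
            rw [hs_succ m hm', Finset.sum_insert (hiS m hm'), Finset.sum_insert (hiS m hm')]
            ring
  set V : ℝ := ∑ j, v j with hVdef
  set T : ℝ := ∑ j, t j with hTdef
  have hV0 : 0 ≤ V := Finset.sum_nonneg fun j _ => hv0 j
  have hT0 : 0 ≤ T := Finset.sum_nonneg fun j _ => ht0 j
  have hsum_le_v : ∀ m, ∑ j ∈ s m, v j ≤ V :=
    fun m => Finset.sum_le_sum_of_subset_of_nonneg (Finset.subset_univ _)
      (fun j _ _ => hv0 j)
  have hsum_le_t : ∀ m, ∑ j ∈ s m, t j ≤ T :=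
    fun m => Finset.sum_le_sum_of_subset_of_nonneg (Finset.subset_univ _)
      (fun j _ _ => ht0 j)
  have hMle : M ≤ K * (M ^ e * V + T) := by
    rw [hMdef]
    apply Finset.sup'_le
    intro k hk
    have hk' : k ≤ n := by simpa [Nat.lt_succ_iff] using Finset.mem_range.mp hk
    have h1 := hcum k hk'
    have h2 : 0 ≤ M ^ e := Real.rpow_nonneg hM0 _
    have h3 := hsum_le_v k
    have h4 := hsum_le_t k
    have c1 : K * (M ^ e * (∑ j ∈ s k, v j) + ∑ j ∈ s k, t j)
        ≤ K * (M ^ e * V + T) := by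
      apply mul_le_mul_of_nonneg_left _ (by linarith : (0:ℝ) ≤ K)
      have := mul_le_mul_of_nonneg_left h3 h2
      linarith
    linarith
  have hfinal : M ≤ max (2 * K) ((2 * K) ^ r) * max T (V ^ r) := by
    rw [hedef] at hMle
    exact final_algebra hK1 hM0 hV0 hT0 hp hpdef hMle
  -- identify the LHS with A n
  have hLHS : ∫ ω, |∑ i, Y i ω| ^ p ∂P = A n := by
    rw [hAdef]
    have h1 : s n = Finset.univ := by
      ext j; simp [hsdef, j.isLt]
    apply integral_congr_ae
    apply Filter.Eventually.of_forall
    intro ω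
    rw [hSdef]
    simp only [h1]
  calc ∫ ω, |∑ i, Y i ω| ^ p ∂P = A n := hLHS
    _ ≤ M := hAM n le_rfl
    _ ≤ max (2 * K) ((2 * K) ^ r) * max T (V ^ r) := hfinal
end

section
/- Let (Z_j)_{j≥1} be i.i.d. real-valued random variables with mean zero, unit variance, and finite moments of every order. For each n ∈ ℕ define the Donsker approximation S^n on [0,1] by S^n_t = n^{−1/2} ( ∑_{j=1}^{i−1} Z_j + n·(t − (i−1)/n) · Z_i ) for t ∈ [(i−1)/n, i/n], i ∈ {1,…,n}. Then for every integer p ≥ 1 there exists a constant C_p, depending only on p and the law of Z_1, such that sup_{n∈ℕ} E[ |S^n_t − S^n_s|^{2p} ] ≤ C_p |t−s|^p for all 0 ≤ s < t ≤ 1. -/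
open MeasureTheory ProbabilityTheory
open Finset
open scoped ENNReal
set_option maxHeartbeats 1000000

/-- The Donsker approximation built from the variables `(Z_j)_{j≥1}` (here `Z j` stands
for `Z_{j+1}`): the piecewise linear process on `[0,1]` with nodes
`S^n_{i/n} = n^{-1/2} ∑_{j=1}^{i} Z_j`, linearly interpolated on `[(i-1)/n, i/n]`.
For `t ∈ [(i-1)/n, i/n]` one has `⌊nt⌋ = i - 1` (or `i` with a vanishing extra term),
so this closed formula agrees with the piecewise description. -/
noncomputable def donskerApprox {Ω : Type*} (Z : ℕ → Ω → ℝ) (n : ℕ) (t : ℝ) (ω : Ω) : ℝ :=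
  ((n : ℝ) ^ ((1 : ℝ) / 2))⁻¹ *
    ((∑ j ∈ Finset.range ⌊(n : ℝ) * t⌋₊, Z j ω) +
      ((n : ℝ) * t - (⌊(n : ℝ) * t⌋₊ : ℝ)) * Z ⌊(n : ℝ) * t⌋₊ ω)

section DonskerAux
variable {Ω : Type*} {mΩ : MeasurableSpace Ω} {P : Measure Ω} [IsProbabilityMeasure P]
  {Z : ℕ → Ω → ℝ}

/-- transfer integrals of measurable functions of `Z j` to `Z 0` -/
lemma dmb_transfer (hmeas : ∀ j, Measurable (Z j)) (hident : ∀ j, P.map (Z j) = P.map (Z 0))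
    (j : ℕ) {h : ℝ → ℝ} (hh : Measurable h) :
    ∫ ω, h (Z j ω) ∂P = ∫ ω, h (Z 0 ω) ∂P := by
  rw [← integral_map (hmeas j).aemeasurable hh.aestronglyMeasurable, hident j,
    integral_map (hmeas 0).aemeasurable hh.aestronglyMeasurable]

lemma dmb_memLp (hmeas : ∀ j, Measurable (Z j)) (hident : ∀ j, P.map (Z j) = P.map (Z 0))
    (hmom : ∀ m : ℕ, Integrable (fun ω => |Z 0 ω| ^ m) P) (j m : ℕ) :
    MemLp (Z j) m P := by
  have h0 : MemLp (Z 0) m P := by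
    rcases Nat.eq_zero_or_pos m with hm | hm
    · subst hm
      simpa using (memLp_zero_iff_aestronglyMeasurable).2 (hmeas 0).aestronglyMeasurable
    · have h1 : MemLp (fun ω => ‖Z 0 ω‖ ^ ((m : ℝ≥0∞)).toReal) 1 P := by
        rw [memLp_one_iff_integrable]
        have := hmom m
        refine this.congr ?_
        refine Filter.Eventually.of_forall (fun ω => ?_)
        simp [Real.norm_eq_abs, Real.rpow_natCast]
      have hmm : ((m : ℝ≥0∞)) / m = 1 := ENNReal.div_self (by exact_mod_cast hm.ne') (by simp)
      rw [← hmm] at h1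
      exact (memLp_norm_rpow_iff (q := m) (p := m) (hmeas 0).aestronglyMeasurable
        (by exact_mod_cast hm.ne') (by simp)).1 h1
  have h3 : MemLp (id : ℝ → ℝ) m (P.map (Z 0)) := by
    rw [memLp_map_measure_iff aestronglyMeasurable_id (hmeas 0).aemeasurable]
    exact h0
  rw [← hident j] at h3
  rw [memLp_map_measure_iff aestronglyMeasurable_id (hmeas j).aemeasurable] at h3
  exact h3

lemma dmb_integrable_abs_pow {f : Ω → ℝ} {m : ℕ} (hf : MemLp f m P) :
    Integrable (fun ω => |f ω| ^ m) P := by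
  rcases Nat.eq_zero_or_pos m with hm | hm
  · subst hm; simpa using integrable_const (1 : ℝ)
  · have h1 := hf.integrable_norm_rpow' (μ := P)
    refine h1.congr ?_
    refine Filter.Eventually.of_forall (fun ω => ?_)
    simp [Real.norm_eq_abs, Real.rpow_natCast]

lemma dmb_integrable_pow {f : Ω → ℝ} {m : ℕ} (hf : MemLp f m P) (hfm : AEStronglyMeasurable f P) :
    Integrable (fun ω => f ω ^ m) P := by
  refine (dmb_integrable_abs_pow hf).mono' (hfm.pow _) ?_
  refine Filter.Eventually.of_forall (fun ω => ?_)
  simp [Real.norm_eq_abs, abs_pow]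

-- pointwise odd-power bound
lemma dmb_abs_pow_le (x : ℝ) (r : ℕ) : |x| ^ (2*r+1) ≤ x ^ (2*r) + x ^ (2*r+2) := by
  have hxe : ∀ k : ℕ, |x| ^ (2*k) = x ^ (2*k) := by
    intro k; rw [pow_mul, pow_mul, sq_abs]
  rcases le_total |x| 1 with h | h
  · have h1 : |x| ^ (2*r+1) ≤ |x| ^ (2*r) :=
      pow_le_pow_of_le_one (abs_nonneg x) h (by omega)
    have h2 : (0:ℝ) ≤ x ^ (2*r+2) := by
      have := sq_nonneg (x ^ (r+1)); rwa [← pow_mul, show (r+1)*2 = 2*r+2 by ring] at this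
    calc |x| ^ (2*r+1) ≤ x ^ (2*r) := by rw [← hxe r]; exact h1
    _ ≤ x ^ (2*r) + x ^ (2*r+2) := by linarith
  · have h1 : |x| ^ (2*r+1) ≤ |x| ^ (2*r+2) := pow_le_pow_right₀ h (by omega)
    have h2 : (0:ℝ) ≤ x ^ (2*r) := by
      have := sq_nonneg (x ^ r); rwa [← pow_mul, show r*2 = 2*r by ring] at this
    calc |x| ^ (2*r+1) ≤ x ^ (2*r+2) := by
          rw [show 2*r+2 = 2*(r+1) by ring] at h1 ⊢; rw [← hxe (r+1)]; exact h1
    _ ≤ x ^ (2*r) + x ^ (2*r+2) := by linarith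

-- choose sum bound
lemma dmb_choose_sum (q' : ℕ) :
    ∑ k ∈ range (2*q'+1), (2*q'+2).choose (k+2) ≤ 2^(2*q'+2) := by
  have h1 := Nat.sum_range_choose (2*q'+2)
  rw [show 2*q'+2+1 = (2*q'+1)+1+1 by ring] at h1
  rw [Finset.sum_range_succ', Finset.sum_range_succ'] at h1
  norm_num at h1
  have h2 : (∑ k ∈ range (2*q'+1), (2*q'+2).choose (k+1+1)) ≤ 2^(2*q'+2) := by omega
  exact h2

lemma dmb_core (hmeas : ∀ j, Measurable (Z j))
    (hindep : iIndepFun Z P)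
    (hident : ∀ j, P.map (Z j) = P.map (Z 0))
    (hmean : ∫ ω, Z 0 ω ∂P = 0)
    (hmom : ∀ m : ℕ, Integrable (fun ω => |Z 0 ω| ^ m) P)
    (p : ℕ) {M : ℝ} (hM1 : 1 ≤ M) (hM : ∀ r, r ≤ 2*p → |∫ ω, (Z 0 ω)^r ∂P| ≤ M)
    (a : ℕ → ℝ) (ha0 : ∀ j, 0 ≤ a j) (ha1 : ∀ j, a j ≤ 1) (F : Finset ℕ) :
    ∀ q, q ≤ p → ∫ ω, (∑ j ∈ F, a j * Z j ω) ^ (2*q) ∂P ≤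
      ((2*4^p*M) * (1 + ∑ j ∈ F, (a j)^2)) ^ q := by
  classical
  have h4 : (1:ℝ) ≤ 4^p := one_le_pow₀ (by norm_num)
  have hK1 : (1:ℝ) ≤ 2*4^p*M := by nlinarith
  set K : ℝ := 2*4^p*M with hKdef
  -- basic memLp facts
  have hZmem : ∀ j m : ℕ, MemLp (Z j) m P := dmb_memLp hmeas hident hmom
  have hWmem : ∀ j m : ℕ, MemLp (fun ω => a j * Z j ω) m P := fun j m => (hZmem j m).const_mul _
  have hWmeas : ∀ j, Measurable (fun ω => a j * Z j ω) := fun j => (hmeas j).const_mul _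
  induction F using Finset.induction_on with
  | empty =>
    intro q hq
    simp only [sum_empty, add_zero, mul_one]
    rcases Nat.eq_zero_or_pos q with h | h
    · subst h; simp
    · rw [zero_pow (by omega : 2*q ≠ 0)]
      simp only [integral_zero]
      positivity
  | @insert i F₀ hi IH =>
    intro q hq
    rcases Nat.eq_zero_or_pos q with h | h
    · subst h; simp
    obtain ⟨q', rfl⟩ : ∃ q', q = q'+1 := ⟨q-1, by omega⟩
    set S₀ : Ω → ℝ := fun ω => ∑ j ∈ F₀, a j * Z j ω with hS₀def
    set W : Ω → ℝ := fun ω => a i * Z i ω with hWdef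
    set A₀ : ℝ := ∑ j ∈ F₀, (a j)^2 with hA₀def
    set B : ℝ := K * (1 + A₀) with hBdef
    have hA₀0 : 0 ≤ A₀ := Finset.sum_nonneg (fun j _ => sq_nonneg _)
    have hB1 : (1:ℝ) ≤ B := by
      rw [hBdef]; nlinarith
    have hB0 : (0:ℝ) ≤ B := by linarith
    -- independence
    have hiW : iIndepFun
        (fun j => fun ω => a j * Z j ω) P :=
      hindep.comp (fun j x => a j * x) (fun j => measurable_const_mul _)
    have hindepSW : IndepFun S₀ W P := by
      have h := hiW.indepFun_finset_sum_of_notMem hWmeas hi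
      have hSeq : (∑ j ∈ F₀, (fun ω => a j * Z j ω)) = S₀ := by
        funext ω; simp [Finset.sum_apply, hS₀def]
      rwa [hSeq] at h
    have hindep_pow : ∀ m k : ℕ, IndepFun (fun ω => W ω ^ k) (fun ω => S₀ ω ^ m) P :=
      fun m k => (hindepSW.symm).comp (measurable_id.pow_const k) (measurable_id.pow_const m)
    -- integrability
    have hmemS₀ : ∀ m : ℕ, MemLp S₀ m P :=
      fun m => memLp_finset_sum F₀ (fun j _ => hWmem j m)
    have hS₀sm : AEStronglyMeasurable S₀ P := (hmemS₀ 1).aestronglyMeasurable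
    have hintS₀ : ∀ m : ℕ, Integrable (fun ω => S₀ ω ^ m) P :=
      fun m => dmb_integrable_pow (hmemS₀ m) hS₀sm
    have hintS₀abs : ∀ m : ℕ, Integrable (fun ω => |S₀ ω| ^ m) P :=
      fun m => dmb_integrable_abs_pow (hmemS₀ m)
    have hintW : ∀ k : ℕ, Integrable (fun ω => W ω ^ k) P :=
      fun k => dmb_integrable_pow (hWmem i k) (hWmeas i).aestronglyMeasurable
    have hintProd : ∀ m k : ℕ, Integrable (fun ω => W ω ^ k * S₀ ω ^ m) P :=
      fun m k => (hindep_pow m k).integrable_mul (hintW k) (hintS₀ m)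
    -- moments of W
    have hZmom : ∀ k : ℕ, ∫ ω, (Z i ω)^k ∂P = ∫ ω, (Z 0 ω)^k ∂P :=
      fun k => dmb_transfer hmeas hident i (measurable_id.pow_const k)
    have hWval : ∀ k : ℕ, ∫ ω, W ω ^ k ∂P = (a i)^k * ∫ ω, (Z 0 ω)^k ∂P := by
      intro k
      simp only [hWdef, mul_pow]
      rw [integral_const_mul, hZmom k]
    -- expansion
    have hexpand : ∫ ω, (∑ j ∈ insert i F₀, a j * Z j ω) ^ (2*(q'+1)) ∂P
        = ∑ k ∈ range (2*q'+2+1), ((a i)^k * (∫ ω, (Z 0 ω)^k ∂P) *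
            ((2*q'+2).choose k : ℝ) * ∫ ω, S₀ ω ^ (2*q'+2-k) ∂P) := by
      have h1 : ∀ ω, (∑ j ∈ insert i F₀, a j * Z j ω) ^ (2*(q'+1))
          = ∑ k ∈ range (2*q'+2+1), W ω^k * S₀ ω^(2*q'+2-k) * ((2*q'+2).choose k : ℝ) := by
        intro ω
        rw [Finset.sum_insert hi, show 2*(q'+1) = 2*q'+2 by ring]
        exact add_pow _ _ _
      simp_rw [h1]
      rw [integral_finset_sum _ (fun k _ => (hintProd _ k).mul_const _)]
      refine Finset.sum_congr rfl (fun k _ => ?_)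
      rw [integral_mul_const, (hindep_pow _ k).integral_fun_mul_eq_mul_integral ((hWmeas i).pow_const k).aestronglyMeasurable
        (hS₀sm.pow _), hWval k]
      ring
    -- even moment bounds from IH
    have hEv : ∀ r, r ≤ q' → ∫ ω, S₀ ω ^ (2*r) ∂P ≤ B ^ q' := by
      intro r hr
      refine (IH r (by omega)).trans ?_
      exact pow_le_pow_right₀ hB1 hr
    have hEvNonneg : ∀ r : ℕ, 0 ≤ ∫ ω, S₀ ω ^ (2*r) ∂P := by
      intro r
      refine integral_nonneg (fun ω => ?_)
      rw [show 2*r = r*2 by ring, pow_mul]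
      exact sq_nonneg _
    -- all moments ≤ 2 B^q'
    have hAbsM : ∀ m, m ≤ 2*q' → |∫ ω, S₀ ω ^ m ∂P| ≤ 2 * B ^ q' := by
      intro m hm
      have hBq' : (1:ℝ) ≤ B ^ q' := one_le_pow₀ hB1
      rcases Nat.even_or_odd m with ⟨r, hr⟩ | ⟨r, hr⟩
      · have hm2 : m = 2*r := by omega
        subst hm2
        rw [abs_of_nonneg (hEvNonneg r)]
        have := hEv r (by omega)
        linarith
      · have hm2 : m = 2*r+1 := by omega
        subst hm2
        have h1 : |∫ ω, S₀ ω ^ (2*r+1) ∂P| ≤ ∫ ω, |S₀ ω| ^ (2*r+1) ∂P := by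
          have hni := norm_integral_le_integral_norm (μ := P) (fun ω => S₀ ω ^ (2*r+1))
          simp only [Real.norm_eq_abs] at hni
          refine hni.trans (le_of_eq ?_)
          congr 1; funext ω; rw [abs_pow]
        refine h1.trans ?_
        have h2 : ∫ ω, |S₀ ω| ^ (2*r+1) ∂P ≤ ∫ ω, (S₀ ω ^ (2*r) + S₀ ω ^ (2*r+2)) ∂P := by
          refine integral_mono (hintS₀abs _) ((hintS₀ _).add (hintS₀ _)) (fun ω => ?_)
          exact dmb_abs_pow_le (S₀ ω) r
        refine h2.trans ?_
        rw [integral_add (hintS₀ _) (hintS₀ _)]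
        have e1 := hEv r (by omega)
        have e2 : ∫ ω, S₀ ω ^ (2*r+2) ∂P ≤ B ^ q' := by
          have := hEv (r+1) (by omega)
          rwa [show 2*(r+1) = 2*r+2 by ring] at this
        linarith
    -- bound the terms
    rw [hexpand]
    rw [Finset.sum_range_succ', Finset.sum_range_succ']
    -- now : ∑_{k ∈ range (2q'+1)} T(k+1+1) + T (0+1) + T 0
    have hT0 : (a i)^0 * (∫ ω, (Z 0 ω)^0 ∂P) * ((2*q'+2).choose 0 : ℝ)
        * ∫ ω, S₀ ω ^ (2*q'+2-0) ∂P ≤ B ^ (q'+1) := by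
      simp only [pow_zero, Nat.choose_zero_right, Nat.cast_one, one_mul, Nat.sub_zero]
      rw [integral_const]
      simp only [probReal_univ, one_smul, one_mul]
      have := IH (q'+1) hq
      rwa [show 2*(q'+1) = 2*q'+2 by ring] at this
    have hT1 : (a i)^(0+1) * (∫ ω, (Z 0 ω)^(0+1) ∂P) * ((2*q'+2).choose (0+1) : ℝ)
        * ∫ ω, S₀ ω ^ (2*q'+2-(0+1)) ∂P = 0 := by
      simp only [zero_add, pow_one]
      rw [hmean]
      ring
    have hmid : ∑ k ∈ range (2*q'+1), ((a i)^(k+1+1) * (∫ ω, (Z 0 ω)^(k+1+1) ∂P) *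
        ((2*q'+2).choose (k+1+1) : ℝ) * ∫ ω, S₀ ω ^ (2*q'+2-(k+1+1)) ∂P)
        ≤ (a i)^2 * K * B ^ q' := by
      have hstep : ∀ k ∈ range (2*q'+1), (a i)^(k+1+1) * (∫ ω, (Z 0 ω)^(k+1+1) ∂P) *
          ((2*q'+2).choose (k+1+1) : ℝ) * ∫ ω, S₀ ω ^ (2*q'+2-(k+1+1)) ∂P
          ≤ ((2*q'+2).choose (k+2) : ℝ) * ((a i)^2 * M * (2 * B ^ q')) := by
        intro k hk
        rw [Finset.mem_range] at hk
        have hb1 : (a i)^(k+1+1) ≤ (a i)^2 :=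
          pow_le_pow_of_le_one (ha0 i) (ha1 i) (by omega)
        have hb2 : |∫ ω, (Z 0 ω)^(k+1+1) ∂P| ≤ M := hM _ (by omega)
        have hb3 : |∫ ω, S₀ ω ^ (2*q'+2-(k+1+1)) ∂P| ≤ 2 * B ^ q' := hAbsM _ (by omega)
        calc (a i)^(k+1+1) * (∫ ω, (Z 0 ω)^(k+1+1) ∂P) *
            ((2*q'+2).choose (k+1+1) : ℝ) * ∫ ω, S₀ ω ^ (2*q'+2-(k+1+1)) ∂P
            ≤ |(a i)^(k+1+1) * (∫ ω, (Z 0 ω)^(k+1+1) ∂P) *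
            ((2*q'+2).choose (k+1+1) : ℝ) * ∫ ω, S₀ ω ^ (2*q'+2-(k+1+1)) ∂P| := le_abs_self _
          _ = (a i)^(k+1+1) * |∫ ω, (Z 0 ω)^(k+1+1) ∂P| *
            ((2*q'+2).choose (k+1+1) : ℝ) * |∫ ω, S₀ ω ^ (2*q'+2-(k+1+1)) ∂P| := by
              rw [abs_mul, abs_mul, abs_mul, abs_of_nonneg (pow_nonneg (ha0 i) _),
                Nat.abs_cast]
          _ ≤ (a i)^2 * M * ((2*q'+2).choose (k+1+1) : ℝ) * (2 * B ^ q') := by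
              have hc0 : (0:ℝ) ≤ ((2*q'+2).choose (k+1+1) : ℝ) := Nat.cast_nonneg _
              have hM0 : (0:ℝ) ≤ M := by linarith
              have ha2 : (0:ℝ) ≤ (a i)^2 := sq_nonneg _
              gcongr
          _ = ((2*q'+2).choose (k+2) : ℝ) * ((a i)^2 * M * (2 * B ^ q')) := by ring
      refine (Finset.sum_le_sum hstep).trans ?_
      rw [← Finset.sum_mul]
      have hcs : (∑ k ∈ range (2*q'+1), ((2*q'+2).choose (k+2) : ℝ)) ≤ 4^p := by
        have h1 := dmb_choose_sum q'
        have h2 : ((∑ k ∈ range (2*q'+1), (2*q'+2).choose (k+2) : ℕ) : ℝ)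
            ≤ ((2^(2*q'+2) : ℕ) : ℝ) := by exact_mod_cast h1
        rw [Nat.cast_sum] at h2
        refine h2.trans ?_
        have h3 : ((2:ℝ))^(2*q'+2) ≤ (4:ℝ)^p := by
          rw [show ((4:ℝ)) = 2^2 by norm_num, ← pow_mul]
          exact pow_le_pow_right₀ (by norm_num) (by omega)
        push_cast
        exact h3
      have hpos : (0:ℝ) ≤ (a i)^2 * M * (2 * B ^ q') :=
        mul_nonneg (mul_nonneg (sq_nonneg _) (by linarith : (0:ℝ) ≤ M))
          (mul_nonneg (by norm_num) (pow_nonneg hB0 _))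
      calc (∑ k ∈ range (2*q'+1), ((2*q'+2).choose (k+2) : ℝ)) * ((a i)^2 * M * (2 * B ^ q'))
          ≤ 4^p * ((a i)^2 * M * (2 * B ^ q')) := by gcongr
        _ = (a i)^2 * K * B ^ q' := by rw [hKdef]; ring
    -- combine
    have hfin : ∑ k ∈ range (2*q'+1), ((a i)^(k+1+1) * (∫ ω, (Z 0 ω)^(k+1+1) ∂P) *
        ((2*q'+2).choose (k+1+1) : ℝ) * ∫ ω, S₀ ω ^ (2*q'+2-(k+1+1)) ∂P)
        + (a i)^(0+1) * (∫ ω, (Z 0 ω)^(0+1) ∂P) * ((2*q'+2).choose (0+1) : ℝ)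
          * ∫ ω, S₀ ω ^ (2*q'+2-(0+1)) ∂P
        + (a i)^0 * (∫ ω, (Z 0 ω)^0 ∂P) * ((2*q'+2).choose 0 : ℝ)
          * ∫ ω, S₀ ω ^ (2*q'+2-0) ∂P
        ≤ (K * (1 + ∑ j ∈ insert i F₀, (a j)^2)) ^ (q'+1) := by
      have hsum2 : ∑ j ∈ insert i F₀, (a j)^2 = (a i)^2 + A₀ := by
        rw [Finset.sum_insert hi]
      rw [hsum2, hT1, add_zero]
      have hle : B ^ (q'+1) + (a i)^2 * K * B ^ q' ≤ (K * (1 + ((a i)^2 + A₀))) ^ (q'+1) := by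
        have hBle : B ≤ K * (1 + ((a i)^2 + A₀)) := by
          rw [hBdef]
          nlinarith [sq_nonneg (a i)]
        have h1 : B ^ (q'+1) + (a i)^2 * K * B ^ q'
            = B ^ q' * (B + (a i)^2 * K) := by ring
        have h2 : B + (a i)^2 * K = K * (1 + ((a i)^2 + A₀)) := by
          rw [hBdef]; ring
        rw [h1, h2]
        calc B ^ q' * (K * (1 + ((a i)^2 + A₀)))
            ≤ (K * (1 + ((a i)^2 + A₀))) ^ q' * (K * (1 + ((a i)^2 + A₀))) :=
              mul_le_mul_of_nonneg_right (pow_le_pow_left₀ hB0 hBle q')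
                (by linarith [hB1.trans hBle])
          _ = (K * (1 + ((a i)^2 + A₀))) ^ (q'+1) := (pow_succ _ _).symm
      linarith [hmid, hT0]
    exact le_trans (by linarith [hmid, hT0, hT1]) hfin

lemma dmb_rep_aux (Zω : ℕ → ℝ) (r : ℝ) (hr : 0 ≤ r) (m : ℕ) (hm : ⌊r⌋₊ < m) :
    ∑ j ∈ Finset.range m, (min r ((j:ℝ)+1) - min r (j:ℝ)) * Zω j
      = (∑ j ∈ Finset.range ⌊r⌋₊, Zω j) + (r - (⌊r⌋₊ : ℝ)) * Zω ⌊r⌋₊ := by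
  have hfl : (⌊r⌋₊ : ℝ) ≤ r := Nat.floor_le hr
  have hfl2 : r < (⌊r⌋₊ : ℝ) + 1 := Nat.lt_floor_add_one r
  rw [← Finset.sum_range_add_sum_Ico _ (le_of_lt hm)]
  congr 1
  · refine Finset.sum_congr rfl (fun j hj => ?_)
    rw [Finset.mem_range] at hj
    have h1 : ((j:ℝ)+1) ≤ r := by
      have : ((j:ℝ)+1) ≤ (⌊r⌋₊ : ℝ) := by exact_mod_cast Nat.succ_le_of_lt hj
      linarith
    rw [min_eq_right h1, min_eq_right (by linarith : (j:ℝ) ≤ r)]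
    ring
  · refine Finset.sum_eq_single_of_mem _ (Finset.mem_Ico.2 ⟨le_rfl, hm⟩) (fun j hj hne => ?_) |>.trans ?_
    · rw [Finset.mem_Ico] at hj
      have h1 : (⌊r⌋₊ : ℝ) + 1 ≤ (j:ℝ) := by
        have : ⌊r⌋₊ + 1 ≤ j := by omega
        exact_mod_cast this
      rw [min_eq_left (by linarith : r ≤ (j:ℝ)), min_eq_left (by linarith : r ≤ (j:ℝ)+1)]
      ring
    · rw [min_eq_left (by linarith : r ≤ (⌊r⌋₊:ℝ)+1), min_eq_right hfl]

lemma dmb_abs_pow_even (x : ℝ) (m : ℕ) : |x| ^ (2*m) = x ^ (2*m) := by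
  rw [show 2*m = m*2 by ring, pow_mul, pow_mul, pow_abs, sq_abs]


end DonskerAux

/-- Uniform-in-`n` moment bound for the Donsker approximation: if `(Z_j)` are i.i.d.
centered with unit variance and finite moments of every order, then for every `p ≥ 1`
there is a constant `C_p` (depending only on `p` and the law of `Z_1`) with
`sup_n E[|S^n_t - S^n_s|^{2p}] ≤ C_p |t-s|^p` for all `0 ≤ s < t ≤ 1`. -/
theorem donsker_moment_bound
    (Ω : Type*) (mΩ : MeasurableSpace Ω) (P : Measure Ω) [IsProbabilityMeasure P]
    (Z : ℕ → Ω → ℝ)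
    (hmeas : ∀ j, Measurable (Z j))
    (hindep : iIndepFun Z P)
    (hident : ∀ j, P.map (Z j) = P.map (Z 0))
    (hmean : ∫ ω, Z 0 ω ∂P = 0)
    (hvar : ∫ ω, (Z 0 ω) ^ 2 ∂P = 1)
    (hmom : ∀ m : ℕ, Integrable (fun ω => |Z 0 ω| ^ m) P)
    (p : ℕ) (hp : 1 ≤ p) :
    ∃ C : ℝ, ∀ n : ℕ, 1 ≤ n → ∀ s t : ℝ, 0 ≤ s → s < t → t ≤ 1 →
      ∫ ω, |donskerApprox Z n t ω - donskerApprox Z n s ω| ^ (2 * p) ∂P ≤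
        C * |t - s| ^ p := by
  classical
  -- the moment constant
  set M : ℝ := ∑ r ∈ Finset.range (2*p+1), ∫ ω, |Z 0 ω| ^ r ∂P with hMdef
  have hMterm : ∀ r, r ≤ 2*p → ∫ ω, |Z 0 ω| ^ r ∂P ≤ M := by
    intro r hr
    refine Finset.single_le_sum (f := fun r => ∫ ω, |Z 0 ω| ^ r ∂P)
      (fun k _ => integral_nonneg (fun ω => by positivity)) ?_
    rw [Finset.mem_range]; omega
  have hM1 : (1:ℝ) ≤ M := by
    have h0 : ∫ ω, |Z 0 ω| ^ (0:ℕ) ∂P = 1 := by simp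
    have := hMterm 0 (by omega)
    linarith
  have hMabs : ∀ r, r ≤ 2*p → |∫ ω, (Z 0 ω)^r ∂P| ≤ M := by
    intro r hr
    have h1 := norm_integral_le_integral_norm (μ := P) (fun ω => (Z 0 ω)^r)
    simp only [Real.norm_eq_abs, abs_pow] at h1
    exact h1.trans (hMterm r hr)
  set K : ℝ := 2*4^p*M with hKdef
  have h4 : (1:ℝ) ≤ 4^p := one_le_pow₀ (by norm_num)
  have hK1 : (1:ℝ) ≤ K := by rw [hKdef]; nlinarith
  have hZmem : ∀ j m : ℕ, MemLp (Z j) m P := dmb_memLp hmeas hident hmom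
  refine ⟨2^(2*p+1)*M + (2*K)^p, ?_⟩
  intro n hn s t hs hst ht1
  have hn0 : (0:ℝ) < n := by exact_mod_cast hn
  have hns0 : 0 ≤ (n:ℝ)*s := mul_nonneg hn0.le hs
  have hnt0 : 0 ≤ (n:ℝ)*t := mul_nonneg hn0.le (hs.trans hst.le)
  have hstn : (n:ℝ)*s ≤ (n:ℝ)*t := by
    have := hst.le; nlinarith
  set u : ℕ := ⌊(n:ℝ)*s⌋₊ with hudef
  set v : ℕ := ⌊(n:ℝ)*t⌋₊ with hvdef
  have huv : u ≤ v := Nat.floor_mono hstn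
  have hufl : (u:ℝ) ≤ (n:ℝ)*s := Nat.floor_le hns0
  have hvfl : (v:ℝ) ≤ (n:ℝ)*t := Nat.floor_le hnt0
  have hvfl2 : (n:ℝ)*t < (v:ℝ) + 1 := Nat.lt_floor_add_one _
  have hufl2 : (n:ℝ)*s < (u:ℝ) + 1 := Nat.lt_floor_add_one _
  -- the weights
  set g : ℝ → ℝ := fun x => max ((n:ℝ)*s) (min ((n:ℝ)*t) x) with hgdef
  set a : ℕ → ℝ := fun j => g ((j:ℝ)+1) - g (j:ℝ) with hadef
  have hgkey : ∀ x : ℝ, g x = (n:ℝ)*s + min ((n:ℝ)*t) x - min ((n:ℝ)*s) x := by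
    intro x
    simp only [hgdef, min_def, max_def]
    split_ifs <;> linarith
  have hg_mono : Monotone g := fun x y hxy =>
    max_le_max le_rfl (min_le_min le_rfl hxy)
  have hg_lb : ∀ x, (n:ℝ)*s ≤ g x := fun x => le_max_left _ _
  have hg_ub : ∀ x, g x ≤ (n:ℝ)*t := fun x => max_le hstn (min_le_left _ _)
  have ha0 : ∀ j, 0 ≤ a j := by
    intro j
    have := hg_mono (by linarith : (j:ℝ) ≤ (j:ℝ)+1)
    simp only [hadef]; linarith
  have ha1 : ∀ j, a j ≤ 1 := by
    intro j
    have h1 : g ((j:ℝ)+1) ≤ g (j:ℝ) + 1 := by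
      rw [hgkey, hgkey]
      simp only [min_def]
      split_ifs <;> linarith
    simp only [hadef]; linarith
  have haA : ∀ j, a j ≤ (n:ℝ)*t - (n:ℝ)*s := by
    intro j
    have := hg_lb (j:ℝ); have := hg_ub ((j:ℝ)+1)
    simp only [hadef]; linarith
  have hgsum : ∑ j ∈ range (v+1), a j = (n:ℝ)*t - (n:ℝ)*s := by
    have h1 : ∀ j : ℕ, a j = (fun k : ℕ => g (k:ℝ)) (j+1) - (fun k : ℕ => g (k:ℝ)) j := by
      intro j; simp only [hadef]; push_cast; ring_nf
    calc ∑ j ∈ range (v+1), a j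
        = ∑ j ∈ range (v+1), ((fun k : ℕ => g (k:ℝ)) (j+1) - (fun k : ℕ => g (k:ℝ)) j) :=
          Finset.sum_congr rfl (fun j _ => h1 j)
      _ = (fun k : ℕ => g (k:ℝ)) (v+1) - (fun k : ℕ => g (k:ℝ)) 0 := Finset.sum_range_sub (fun k : ℕ => g (k:ℝ)) (v+1)
      _ = (n:ℝ)*t - (n:ℝ)*s := by
          simp only []
          push_cast
          rw [hgkey, hgkey]
          rw [min_eq_left (by linarith : (n:ℝ)*t ≤ (v:ℝ)+1),
            min_eq_left (by linarith : (n:ℝ)*s ≤ (v:ℝ)+1),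
            min_eq_right hnt0, min_eq_right hns0]
          ring
  have hAsq : ∑ j ∈ range (v+1), (a j)^2 ≤ (n:ℝ)*t - (n:ℝ)*s := by
    rw [← hgsum]
    refine Finset.sum_le_sum (fun j _ => ?_)
    have := ha0 j; have := ha1 j
    nlinarith
  have hAsq0 : 0 ≤ ∑ j ∈ range (v+1), (a j)^2 :=
    Finset.sum_nonneg (fun j _ => sq_nonneg _)
  -- representation
  have hrep : ∀ ω, donskerApprox Z n t ω - donskerApprox Z n s ω
      = ((n:ℝ) ^ ((1:ℝ)/2))⁻¹ * ∑ j ∈ range (v+1), a j * Z j ω := by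
    intro ω
    simp only [donskerApprox, ← hudef, ← hvdef]
    rw [← mul_sub]
    congr 1
    have hdecomp : ∀ j : ℕ, a j =
        (min ((n:ℝ)*t) ((j:ℝ)+1) - min ((n:ℝ)*t) (j:ℝ))
        - (min ((n:ℝ)*s) ((j:ℝ)+1) - min ((n:ℝ)*s) (j:ℝ)) := by
      intro j
      simp only [hadef]
      rw [hgkey, hgkey]
      ring
    have hsplit : ∑ j ∈ range (v+1), a j * Z j ω
        = (∑ j ∈ range (v+1), (min ((n:ℝ)*t) ((j:ℝ)+1) - min ((n:ℝ)*t) (j:ℝ)) * Z j ω)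
          - ∑ j ∈ range (v+1), (min ((n:ℝ)*s) ((j:ℝ)+1) - min ((n:ℝ)*s) (j:ℝ)) * Z j ω := by
      rw [← Finset.sum_sub_distrib]
      refine Finset.sum_congr rfl (fun j _ => ?_)
      rw [hdecomp j]; ring
    rw [hsplit, dmb_rep_aux (fun j => Z j ω) ((n:ℝ)*t) hnt0 (v+1) (by omega),
      dmb_rep_aux (fun j => Z j ω) ((n:ℝ)*s) hns0 (v+1) (by omega)]
  -- reduce to the normalized sum
  set S : Ω → ℝ := fun ω => ∑ j ∈ range (v+1), a j * Z j ω with hSdef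
  have hc0 : (0:ℝ) ≤ ((n:ℝ) ^ ((1:ℝ)/2))⁻¹ := by positivity
  have hcpow : (((n:ℝ) ^ ((1:ℝ)/2))⁻¹) ^ (2*p) = (((n:ℝ)^p))⁻¹ := by
    rw [inv_pow]
    congr 1
    rw [← Real.rpow_natCast ((n:ℝ) ^ ((1:ℝ)/2)) (2*p), ← Real.rpow_mul hn0.le]
    rw [show ((1:ℝ)/2) * ((2*p : ℕ) : ℝ) = (p : ℝ) by push_cast; ring]
    rw [Real.rpow_natCast]
  have hint_eq : ∫ ω, |donskerApprox Z n t ω - donskerApprox Z n s ω| ^ (2*p) ∂P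
      = (((n:ℝ)^p))⁻¹ * ∫ ω, S ω ^ (2*p) ∂P := by
    rw [← integral_const_mul]
    refine integral_congr_ae (Filter.Eventually.of_forall (fun ω => ?_))
    simp only [hrep ω]
    rw [abs_mul, abs_of_nonneg hc0, mul_pow, hcpow]
    congr 1
    exact dmb_abs_pow_even _ p
  rw [hint_eq, abs_of_pos (sub_pos.2 hst)]
  have hnp : (0:ℝ) < (n:ℝ)^p := pow_pos hn0 p
  have hntns : (n:ℝ)*t - (n:ℝ)*s = (n:ℝ)*(t-s) := by ring
  have hts0 : (0:ℝ) < t - s := sub_pos.2 hst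
  suffices h : ∫ ω, S ω ^ (2*p) ∂P ≤ (2^(2*p+1)*M + (2*K)^p) * ((n:ℝ)*t - (n:ℝ)*s)^p by
    have h2 : ((n:ℝ)*t - (n:ℝ)*s)^p = (n:ℝ)^p * (t-s)^p := by
      rw [hntns, mul_pow]
    calc (((n:ℝ)^p))⁻¹ * ∫ ω, S ω ^ (2*p) ∂P
        ≤ (((n:ℝ)^p))⁻¹ * ((2^(2*p+1)*M + (2*K)^p) * ((n:ℝ)*t - (n:ℝ)*s)^p) :=
          mul_le_mul_of_nonneg_left h (by positivity)
      _ = (2^(2*p+1)*M + (2*K)^p) * (t-s)^p := by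
          rw [h2]; field_simp
  -- two cases
  have hCnn1 : (0:ℝ) ≤ 2^(2*p+1)*M := by positivity
  have hCnn2 : (0:ℝ) ≤ (2*K)^p := by positivity
  rcases le_or_gt ((n:ℝ)*t - (n:ℝ)*s) 1 with hsmall | hbig
  · -- small case: at most two non-zero weights
    have hvu : v ≤ u + 1 := by
      have h1 : (n:ℝ)*t ≤ (n:ℝ)*s + 1 := by linarith
      have h2 : v ≤ ⌊(n:ℝ)*s + 1⌋₊ := Nat.floor_mono h1
      rwa [Nat.floor_add_one hns0] at h2
    have hgns : ∀ x : ℝ, x ≤ (n:ℝ)*s → g x = (n:ℝ)*s := by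
      intro x hx
      simp only [hgdef]
      rw [min_eq_right (hx.trans hstn), max_eq_left hx]
    have hazero : ∀ j, j < u → a j = 0 := by
      intro j hj
      have h1 : (j:ℝ)+1 ≤ (n:ℝ)*s := by
        have : ((j:ℝ)+1) ≤ (u:ℝ) := by exact_mod_cast Nat.succ_le_of_lt hj
        linarith
      simp only [hadef]
      rw [hgns _ h1, hgns _ (by linarith)]
      ring
    have hIcosub : Finset.Ico u (v+1) ⊆ Finset.range (v+1) := by
      intro x hx
      rw [Finset.mem_Ico] at hx; rw [Finset.mem_range]; omega
    have hSsub : ∀ ω, S ω = ∑ j ∈ Finset.Ico u (v+1), a j * Z j ω := by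
      intro ω
      refine (Finset.sum_subset hIcosub (fun x hx hnx => ?_)).symm
      rw [Finset.mem_range] at hx
      rw [Finset.mem_Ico] at hnx
      have : x < u := by omega
      rw [hazero x this, zero_mul]
    have hcard : (Finset.Ico u (v+1)).card = v + 1 - u := Nat.card_Ico _ _
    have hcard2 : (Finset.Ico u (v+1)).card ≤ 2 := by omega
    have hcard1 : 1 ≤ (Finset.Ico u (v+1)).card := by omega
    -- pointwise bound
    have hpt : ∀ ω, S ω ^ (2*p) ≤ 2^(2*p) * ∑ j ∈ Finset.Ico u (v+1), (a j)^(2*p) * |Z j ω| ^ (2*p) := by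
      intro ω
      have h1 : |S ω| ≤ ∑ j ∈ Finset.Ico u (v+1), a j * |Z j ω| := by
        rw [hSsub ω]
        refine (Finset.abs_sum_le_sum_abs _ _).trans (le_of_eq ?_)
        refine Finset.sum_congr rfl (fun j _ => ?_)
        rw [abs_mul, abs_of_nonneg (ha0 j)]
      have h2 : S ω ^ (2*p) = |S ω| ^ (2*p) := (dmb_abs_pow_even _ p).symm
      rw [h2]
      have h3 : |S ω| ^ (2*p) ≤ (∑ j ∈ Finset.Ico u (v+1), a j * |Z j ω|) ^ (2*p) :=
        pow_le_pow_left₀ (abs_nonneg _) h1 _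
      refine h3.trans ?_
      have h4 := pow_sum_div_card_le_sum_pow (f := fun j => a j * |Z j ω|)
        (s := Finset.Ico u (v+1)) (fun j _ => mul_nonneg (ha0 j) (abs_nonneg _)) (2*p-1)
      rw [show 2*p-1+1 = 2*p by omega] at h4
      have hcardpos : (0:ℝ) < ((Finset.Ico u (v+1)).card : ℝ) ^ (2*p-1) := by
        have : (0:ℝ) < ((Finset.Ico u (v+1)).card : ℝ) := by exact_mod_cast hcard1
        positivity
      rw [div_le_iff₀ hcardpos] at h4
      refine h4.trans ?_
      have h5 : (((Finset.Ico u (v+1)).card : ℝ)) ^ (2*p-1) ≤ 2^(2*p) := by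
        calc (((Finset.Ico u (v+1)).card : ℝ)) ^ (2*p-1) ≤ (2:ℝ)^(2*p-1) := by
              refine pow_le_pow_left₀ (by positivity) ?_ _
              exact_mod_cast hcard2
          _ ≤ (2:ℝ)^(2*p) := pow_le_pow_right₀ (by norm_num) (by omega)
      calc (∑ j ∈ Finset.Ico u (v+1), (a j * |Z j ω|) ^ (2*p)) * ((Finset.Ico u (v+1)).card : ℝ) ^ (2*p-1)
          ≤ (∑ j ∈ Finset.Ico u (v+1), (a j * |Z j ω|) ^ (2*p)) * 2^(2*p) := by
            refine mul_le_mul_of_nonneg_left h5 ?_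
            exact Finset.sum_nonneg (fun j _ => pow_nonneg (mul_nonneg (ha0 j) (abs_nonneg _)) _)
        _ = 2^(2*p) * ∑ j ∈ Finset.Ico u (v+1), (a j)^(2*p) * |Z j ω| ^ (2*p) := by
            rw [Finset.sum_congr rfl (fun j _ => by rw [mul_pow])]
            ring
    -- integrate
    have hintS : Integrable (fun ω => S ω ^ (2*p)) P := by
      have hmemS : MemLp S ((2*p : ℕ)) P :=
        memLp_finset_sum (range (v+1)) (fun j _ => (hZmem j (2*p)).const_mul (a j))
      exact dmb_integrable_pow hmemS hmemS.aestronglyMeasurable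
    have hintRHS : Integrable (fun ω => 2^(2*p) * ∑ j ∈ Finset.Ico u (v+1), (a j)^(2*p) * |Z j ω| ^ (2*p)) P := by
      refine Integrable.const_mul ?_ _
      refine integrable_finset_sum _ (fun j _ => ?_)
      exact (dmb_integrable_abs_pow (hZmem j (2*p))).const_mul _
    have hZabs : ∀ j : ℕ, ∫ ω, |Z j ω| ^ (2*p) ∂P = ∫ ω, |Z 0 ω| ^ (2*p) ∂P := by
      intro j
      exact dmb_transfer hmeas hident j (measurable_abs.pow_const _)
    calc ∫ ω, S ω ^ (2*p) ∂P
        ≤ ∫ ω, 2^(2*p) * ∑ j ∈ Finset.Ico u (v+1), (a j)^(2*p) * |Z j ω| ^ (2*p) ∂P :=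
          integral_mono hintS hintRHS hpt
      _ = 2^(2*p) * ∑ j ∈ Finset.Ico u (v+1), (a j)^(2*p) * ∫ ω, |Z 0 ω| ^ (2*p) ∂P := by
          rw [integral_const_mul]
          congr 1
          rw [integral_finset_sum _ (fun j _ => (dmb_integrable_abs_pow (hZmem j (2*p))).const_mul _)]
          refine Finset.sum_congr rfl (fun j _ => ?_)
          rw [integral_const_mul, hZabs j]
      _ ≤ 2^(2*p) * ∑ j ∈ Finset.Ico u (v+1), (a j)^(2*p) * M := by
          refine mul_le_mul_of_nonneg_left ?_ (by positivity)
          refine Finset.sum_le_sum (fun j _ => ?_)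
          exact mul_le_mul_of_nonneg_left (hMterm (2*p) le_rfl) (pow_nonneg (ha0 j) _)
      _ = 2^(2*p) * M * ∑ j ∈ Finset.Ico u (v+1), (a j)^(2*p) := by
          rw [← Finset.sum_mul]; ring
      _ ≤ 2^(2*p) * M * ((n:ℝ)*t - (n:ℝ)*s)^p := by
          refine mul_le_mul_of_nonneg_left ?_ (by positivity)
          have hnts0 : (0:ℝ) ≤ (n:ℝ)*t - (n:ℝ)*s := by linarith
          have h6 : ∑ j ∈ Finset.Ico u (v+1), (a j)^(2*p)
              ≤ ((n:ℝ)*t - (n:ℝ)*s)^(2*p-1) * ∑ j ∈ Finset.Ico u (v+1), a j := by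
            rw [Finset.mul_sum]
            refine Finset.sum_le_sum (fun j _ => ?_)
            have h7 : (a j)^(2*p) = (a j)^(2*p-1) * a j := by
              rw [← pow_succ, show 2*p-1+1 = 2*p by omega]
            rw [h7]
            refine mul_le_mul_of_nonneg_right ?_ (ha0 j)
            exact pow_le_pow_left₀ (ha0 j) (haA j) _
          have h8 : ∑ j ∈ Finset.Ico u (v+1), a j ≤ (n:ℝ)*t - (n:ℝ)*s := by
            rw [← hgsum]
            exact Finset.sum_le_sum_of_subset_of_nonneg hIcosub (fun j _ _ => ha0 j)
          have h9 : ∑ j ∈ Finset.Ico u (v+1), (a j)^(2*p) ≤ ((n:ℝ)*t - (n:ℝ)*s)^(2*p) := by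
            refine h6.trans ?_
            calc ((n:ℝ)*t - (n:ℝ)*s)^(2*p-1) * ∑ j ∈ Finset.Ico u (v+1), a j
                ≤ ((n:ℝ)*t - (n:ℝ)*s)^(2*p-1) * (((n:ℝ)*t - (n:ℝ)*s)) :=
                  mul_le_mul_of_nonneg_left h8 (by positivity)
              _ = ((n:ℝ)*t - (n:ℝ)*s)^(2*p) := by
                  rw [← pow_succ, show 2*p-1+1 = 2*p by omega]
            done
          refine h9.trans ?_
          exact pow_le_pow_of_le_one hnts0 hsmall (by omega)
      _ ≤ (2^(2*p+1)*M + (2*K)^p) * ((n:ℝ)*t - (n:ℝ)*s)^p := by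
          have hnts0 : (0:ℝ) ≤ ((n:ℝ)*t - (n:ℝ)*s)^p := by
            have : (0:ℝ) ≤ (n:ℝ)*t - (n:ℝ)*s := by linarith
            positivity
          have : (2:ℝ)^(2*p) * M ≤ 2^(2*p+1)*M + (2*K)^p := by
            have h10 : (2:ℝ)^(2*p) ≤ 2^(2*p+1) := pow_le_pow_right₀ (by norm_num) (by omega)
            nlinarith
          exact mul_le_mul_of_nonneg_right this hnts0
  · -- big case: use the core moment bound
    have hcore := dmb_core hmeas hindep hident hmean hmom p hM1 hMabs a ha0 ha1
      (range (v+1)) p le_rfl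
    rw [← hKdef] at hcore
    refine hcore.trans ?_
    have h1 : K * (1 + ∑ j ∈ range (v+1), (a j)^2) ≤ 2*K * ((n:ℝ)*t - (n:ℝ)*s) := by
      have h2 : 1 + ∑ j ∈ range (v+1), (a j)^2 ≤ 2 * ((n:ℝ)*t - (n:ℝ)*s) := by
        linarith [hAsq]
      calc K * (1 + ∑ j ∈ range (v+1), (a j)^2) ≤ K * (2 * ((n:ℝ)*t - (n:ℝ)*s)) :=
            mul_le_mul_of_nonneg_left h2 (by linarith)
        _ = 2*K * ((n:ℝ)*t - (n:ℝ)*s) := by ring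
    have h3 : (K * (1 + ∑ j ∈ range (v+1), (a j)^2))^p ≤ (2*K * ((n:ℝ)*t - (n:ℝ)*s))^p := by
      refine pow_le_pow_left₀ ?_ h1 _
      nlinarith
    refine h3.trans ?_
    rw [mul_pow]
    have hnts0 : (0:ℝ) ≤ ((n:ℝ)*t - (n:ℝ)*s)^p := by positivity
    refine mul_le_mul_of_nonneg_right ?_ hnts0
    linarith
end

section
/- Let β be a standard Brownian motion on [0,1] and, for n ≥ 1, let β^n be its piecewise linear interpolation with mesh 1/n, i.e. β^n_t = β_{i/n} + n·(t − i/n)·(β_{(i+1)/n} − β_{i/n}) for t ∈ [i/n, (i+1)/n], 0 ≤ i ≤ n−1. Then for every integer p ≥ 1 there exists a constant C_p, depending only on p, such that: (i) E[|β^n_t − β^n_s|^{2p}] ≤ C_p |t−s|^p for all n ≥ 1 and all s, t ∈ [0,1]; and (ii) sup_{t∈[0,1]} E[|β^n_t − β_t|^{2p}] ≤ C_p n^{−p} for all n ≥ 1. -/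
open MeasureTheory ProbabilityTheory

/-- A standard Brownian motion on `[0,1]`: a real-valued process with measurable
marginals, continuous paths on `[0,1]`, starting at `0`, with centered Gaussian
increments of variance `t - s` and independent increments. -/
def IsStdBrownianMotion {Ω : Type*} [MeasurableSpace Ω] (P : Measure Ω)
    (β : ℝ → Ω → ℝ) : Prop :=
  (∀ t, Measurable (β t)) ∧
  (∀ ω, ContinuousOn (fun t => β t ω) (Set.Icc 0 1)) ∧
  (∀ ω, β 0 ω = 0) ∧
  (∀ s t : ℝ, 0 ≤ s → s ≤ t → t ≤ 1 →
    P.map (fun ω => β t ω - β s ω) = gaussianReal 0 (Real.toNNReal (t - s))) ∧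
  (∀ (n : ℕ) (u : Fin (n + 1) → ℝ), (∀ i, u i ∈ Set.Icc (0 : ℝ) 1) → Monotone u →
    iIndepFun
      (fun i : Fin n => fun ω => β (u i.succ) ω - β (u i.castSucc) ω) P)

/-- The piecewise linear interpolation of a process `β` with mesh `1/n`: for
`t ∈ [i/n, (i+1)/n]` one has `⌊nt⌋ = i` (or `i+1` with a vanishing extra term), so this
closed formula gives `β^n_t = β_{i/n} + n (t - i/n) (β_{(i+1)/n} - β_{i/n})`. -/
noncomputable def linearInterp {Ω : Type*} (β : ℝ → Ω → ℝ) (n : ℕ) (t : ℝ) (ω : Ω) : ℝ :=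
  β ((⌊(n : ℝ) * t⌋₊ : ℝ) / n) ω +
    ((n : ℝ) * t - (⌊(n : ℝ) * t⌋₊ : ℝ)) *
      (β (((⌊(n : ℝ) * t⌋₊ : ℝ) + 1) / n) ω - β ((⌊(n : ℝ) * t⌋₊ : ℝ) / n) ω)

open Real in
open scoped ENNReal NNReal in
/-- The `2p`-th moment seminorm of a standard Gaussian, as a constant in `ℝ≥0∞`. -/
noncomputable def gaussK (p : ℕ) : ℝ≥0∞ :=
  eLpNorm (id : ℝ → ℝ) ((2 * p : ℕ) : ℝ≥0∞) (gaussianReal 0 1)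

open Real in
open scoped ENNReal NNReal in
lemma aux_integrable_pow_gaussian (p : ℕ) :
    Integrable (fun x : ℝ => |x| ^ (2 * p)) (gaussianReal 0 1) := by
  rw [gaussianReal_of_var_ne_zero 0 one_ne_zero]
  rw [integrable_withDensity_iff (measurable_gaussianPDF 0 1)
    (Filter.Eventually.of_forall fun x => ENNReal.ofReal_lt_top)]
  have hpdf : ∀ x : ℝ, ((gaussianPDF 0 1 x).toReal : ℝ) = gaussianPDFReal 0 1 x := fun x =>
    ENNReal.toReal_ofReal (gaussianPDFReal_nonneg 0 1 x)
  simp only [hpdf]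
  have hint : Integrable (fun x : ℝ =>
      ((4 : ℝ) ^ p * p.factorial * (Real.sqrt (2 * π))⁻¹) * Real.exp (-(4 : ℝ)⁻¹ * x ^ 2)) :=
    (integrable_exp_neg_mul_sq (by norm_num)).const_mul _
  refine hint.mono' ?_ (Filter.Eventually.of_forall fun x => ?_)
  · exact ((measurable_abs.pow_const (2 * p)).mul
      (measurable_gaussianPDFReal 0 1)).aestronglyMeasurable
  · have hpdfx : gaussianPDFReal 0 1 x = (Real.sqrt (2 * π))⁻¹ * Real.exp (-x ^ 2 / 2) := by
      simp [gaussianPDFReal]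
    have h1 : (x ^ 2 / 4) ^ p / p.factorial ≤ Real.exp (x ^ 2 / 4) := by
      calc (x ^ 2 / 4) ^ p / p.factorial
          ≤ ∑ i ∈ Finset.range (p + 1), (x ^ 2 / 4) ^ i / i.factorial :=
            Finset.single_le_sum (f := fun i => (x ^ 2 / 4) ^ i / (i.factorial : ℝ))
              (fun i _ => by positivity) (Finset.self_mem_range_succ p)
        _ ≤ Real.exp (x ^ 2 / 4) := Real.sum_le_exp_of_nonneg (by positivity) _
    have h2 : |x| ^ (2 * p) ≤ 4 ^ p * p.factorial * Real.exp (x ^ 2 / 4) := by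
      have e1 : |x| ^ (2 * p) = (x ^ 2) ^ p := by rw [pow_mul, sq_abs]
      have e2 : (x ^ 2) ^ p = 4 ^ p * (x ^ 2 / 4) ^ p := by
        rw [← mul_pow]; congr 1; ring
      rw [e1, e2]
      have h3 : (x ^ 2 / 4) ^ p ≤ p.factorial * Real.exp (x ^ 2 / 4) := by
        rw [div_le_iff₀ (by positivity : (0:ℝ) < p.factorial)] at h1
        linarith [h1]
      calc (4:ℝ) ^ p * (x ^ 2 / 4) ^ p ≤ 4 ^ p * (p.factorial * Real.exp (x ^ 2 / 4)) :=
            mul_le_mul_of_nonneg_left h3 (by positivity)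
        _ = 4 ^ p * p.factorial * Real.exp (x ^ 2 / 4) := by ring
    have hexp : Real.exp (x ^ 2 / 4) * Real.exp (-x ^ 2 / 2) = Real.exp (-(4:ℝ)⁻¹ * x ^ 2) := by
      rw [← Real.exp_add]; congr 1; ring
    rw [Real.norm_eq_abs, abs_of_nonneg (mul_nonneg (by positivity)
      (gaussianPDFReal_nonneg 0 1 x)), hpdfx]
    calc |x| ^ (2 * p) * ((Real.sqrt (2 * π))⁻¹ * Real.exp (-x ^ 2 / 2))
        ≤ (4 ^ p * p.factorial * Real.exp (x ^ 2 / 4)) *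
            ((Real.sqrt (2 * π))⁻¹ * Real.exp (-x ^ 2 / 2)) :=
          mul_le_mul_of_nonneg_right h2 (by positivity)
      _ = (4 ^ p * p.factorial * (Real.sqrt (2 * π))⁻¹) *
            (Real.exp (x ^ 2 / 4) * Real.exp (-x ^ 2 / 2)) := by ring
      _ = (4 ^ p * p.factorial * (Real.sqrt (2 * π))⁻¹) * Real.exp (-(4:ℝ)⁻¹ * x ^ 2) := by
          rw [hexp]

open scoped ENNReal NNReal in
lemma aux_K_ne_top (p : ℕ) (hp : 1 ≤ p) : gaussK p ≠ ⊤ := by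
  have hq0 : ((2 * p : ℕ) : ℝ≥0∞) ≠ 0 := by
    simp only [ne_eq, Nat.cast_eq_zero]; omega
  have hqt : ((2 * p : ℕ) : ℝ≥0∞) ≠ ⊤ := ENNReal.natCast_ne_top _
  rw [gaussK, eLpNorm_eq_lintegral_rpow_enorm_toReal hq0 hqt]
  simp only [enorm_eq_nnnorm]
  apply ENNReal.rpow_ne_top_of_nonneg (by positivity)
  have hfin : (∫⁻ x : ℝ, (‖|x| ^ (2 * p)‖₊ : ℝ≥0∞) ∂(gaussianReal 0 1)) < ⊤ :=
    (aux_integrable_pow_gaussian p).hasFiniteIntegral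
  have heq : ∀ x : ℝ, (‖id x‖₊ : ℝ≥0∞) ^ (((2 * p : ℕ) : ℝ≥0∞)).toReal
      = (‖|x| ^ (2 * p)‖₊ : ℝ≥0∞) := by
    intro x
    rw [ENNReal.toReal_natCast, ENNReal.rpow_natCast]
    simp [nnnorm_pow, Real.nnnorm_abs]
  rw [lintegral_congr heq]
  exact hfin.ne

open scoped ENNReal NNReal in
lemma aux_eLpNorm_of_law {Ω : Type*} [MeasurableSpace Ω] {P : Measure Ω} {X : Ω → ℝ}
    (hX : AEMeasurable X P) {v : ℝ≥0} (h : P.map X = gaussianReal 0 v) (q : ℝ≥0∞) :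
    eLpNorm X q P = ENNReal.ofReal (Real.sqrt v) *
      eLpNorm (id : ℝ → ℝ) q (gaussianReal 0 1) := by
  have h1 : eLpNorm X q P = eLpNorm (id : ℝ → ℝ) q (P.map X) := by
    rw [eLpNorm_map_measure aestronglyMeasurable_id hX, Function.id_comp]
  rw [h1, h]
  have h2 : gaussianReal 0 v = (gaussianReal 0 1).map (fun x => (Real.sqrt v) * x) := by
    rw [gaussianReal_map_const_mul]
    congr 1
    · simp
    · rw [mul_one]
      ext
      exact (Real.sq_sqrt v.coe_nonneg).symm
  rw [h2, eLpNorm_map_measure aestronglyMeasurable_id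
    (measurable_const_mul (Real.sqrt v)).aemeasurable]
  have h3 : (id : ℝ → ℝ) ∘ (fun x => (Real.sqrt v) * x) = (Real.sqrt v : ℝ) • (id : ℝ → ℝ) := by
    funext x; simp [smul_eq_mul]
  rw [h3, eLpNorm_const_smul]
  congr 1
  rw [← ofReal_norm, Real.norm_eq_abs, abs_of_nonneg (Real.sqrt_nonneg _)]

open scoped ENNReal NNReal in
lemma aux_incr {Ω : Type*} [MeasurableSpace Ω] {P : Measure Ω} {β : ℝ → Ω → ℝ}
    (hmeas : ∀ t, Measurable (β t))
    (hlaw : ∀ s t : ℝ, 0 ≤ s → s ≤ t → t ≤ 1 →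
      P.map (fun ω => β t ω - β s ω) = gaussianReal 0 (Real.toNNReal (t - s)))
    (p : ℕ) (c a b r : ℝ) (ha : 0 ≤ a) (hab : a ≤ b) (hb : b ≤ 1)
    (hr : c ^ 2 * (b - a) ≤ r) :
    eLpNorm (fun ω => c * (β b ω - β a ω)) ((2 * p : ℕ) : ℝ≥0∞) P ≤
      ENNReal.ofReal (Real.sqrt r) * gaussK p := by
  have hX : Measurable fun ω => β b ω - β a ω := (hmeas b).sub (hmeas a)
  have h1 : (fun ω => c * (β b ω - β a ω)) = c • (fun ω => β b ω - β a ω) := rfl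
  rw [h1, eLpNorm_const_smul, aux_eLpNorm_of_law hX.aemeasurable (hlaw a b ha hab hb), gaussK,
    ← mul_assoc]
  have hba : ((Real.toNNReal (b - a) : ℝ≥0) : ℝ) = b - a := Real.coe_toNNReal _ (by linarith)
  have h2 : (‖c‖₊ : ℝ≥0∞) * ENNReal.ofReal (Real.sqrt (Real.toNNReal (b - a) : ℝ≥0)) ≤
      ENNReal.ofReal (Real.sqrt r) := by
    rw [← enorm_eq_nnnorm, ← ofReal_norm, Real.norm_eq_abs, hba,
      ← ENNReal.ofReal_mul (abs_nonneg c)]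
    apply ENNReal.ofReal_le_ofReal
    have : |c| * Real.sqrt (b - a) = Real.sqrt (c ^ 2 * (b - a)) := by
      rw [Real.sqrt_mul (sq_nonneg c), Real.sqrt_sq_eq_abs]
    rw [this]
    exact Real.sqrt_le_sqrt hr
  exact mul_le_mul_left h2 _

open scoped ENNReal NNReal in
lemma integral_pow_le {Ω : Type*} [MeasurableSpace Ω] {P : Measure Ω} {f : Ω → ℝ}
    (hf : AEStronglyMeasurable f P) (p : ℕ) (hp : 1 ≤ p) {B : ℝ≥0∞} (hB : B ≠ ⊤)
    (h : eLpNorm f ((2 * p : ℕ) : ℝ≥0∞) P ≤ B) :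
    ∫ ω, |f ω| ^ (2 * p) ∂P ≤ (B ^ (2 * p)).toReal := by
  have hq0 : ((2 * p : ℕ) : ℝ≥0∞) ≠ 0 := by simp only [ne_eq, Nat.cast_eq_zero]; omega
  have hqt : ((2 * p : ℕ) : ℝ≥0∞) ≠ ⊤ := ENNReal.natCast_ne_top _
  have hc0 : (0:ℝ) < ((2 * p : ℕ) : ℝ) := by positivity
  rw [eLpNorm_eq_lintegral_rpow_enorm_toReal hq0 hqt] at h
  simp only [enorm_eq_nnnorm] at h
  have heq : ∀ ω, (‖f ω‖₊ : ℝ≥0∞) ^ (((2 * p : ℕ) : ℝ≥0∞)).toReal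
      = ENNReal.ofReal (|f ω| ^ (2 * p)) := by
    intro ω
    rw [ENNReal.toReal_natCast, ENNReal.rpow_natCast, ENNReal.ofReal_pow (abs_nonneg _)]
    congr 1
    rw [← enorm_eq_nnnorm, ← ofReal_norm, Real.norm_eq_abs]
  rw [lintegral_congr heq] at h
  set A := ∫⁻ ω, ENNReal.ofReal (|f ω| ^ (2 * p)) ∂P with hA
  have hA2 : A ≤ B ^ (2 * p) := by
    have h4 : A = (A ^ ((1:ℝ) / ((2 * p : ℕ) : ℝ))) ^ (((2 * p : ℕ) : ℝ)) := by
      rw [← ENNReal.rpow_mul, one_div_mul_cancel hc0.ne', ENNReal.rpow_one]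
    rw [h4, ← ENNReal.rpow_natCast B]
    exact ENNReal.rpow_le_rpow h hc0.le
  have hnn : 0 ≤ᵐ[P] fun ω => |f ω| ^ (2 * p) :=
    Filter.Eventually.of_forall fun ω => by positivity
  have hm2 : AEStronglyMeasurable (fun ω => |f ω| ^ (2 * p)) P :=
    (continuous_abs.pow (2 * p)).comp_aestronglyMeasurable hf
  rw [integral_eq_lintegral_of_nonneg_ae hnn hm2]
  exact ENNReal.toReal_mono (ENNReal.pow_ne_top hB) hA2

open scoped ENNReal NNReal in
lemma aux_main {Ω : Type*} [MeasurableSpace Ω] {P : Measure Ω} (p : ℕ) (hp : 1 ≤ p)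
    {f : Ω → ℝ} (hf : AEStronglyMeasurable f P) {r : ℝ} (hr : 0 ≤ r)
    (h : eLpNorm f ((2 * p : ℕ) : ℝ≥0∞) P ≤ ENNReal.ofReal (Real.sqrt r) * (3 * gaussK p)) :
    ∫ ω, |f ω| ^ (2 * p) ∂P ≤ ((3 * gaussK p) ^ (2 * p)).toReal * r ^ p := by
  have hK := aux_K_ne_top p hp
  have h3K : (3 : ℝ≥0∞) * gaussK p ≠ ⊤ := ENNReal.mul_ne_top (by simp) hK
  have hB : ENNReal.ofReal (Real.sqrt r) * (3 * gaussK p) ≠ ⊤ :=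
    ENNReal.mul_ne_top ENNReal.ofReal_ne_top h3K
  refine le_trans (integral_pow_le hf p hp hB h) (le_of_eq ?_)
  rw [mul_pow, ← ENNReal.ofReal_pow (Real.sqrt_nonneg r)]
  have : Real.sqrt r ^ (2 * p) = r ^ p := by
    rw [pow_mul, Real.sq_sqrt hr]
  rw [this, ENNReal.toReal_mul, ENNReal.toReal_ofReal (by positivity), mul_comm]

lemma aux_rep {Ω : Type*} (β : ℝ → Ω → ℝ) (n : ℕ) (hn : 1 ≤ n) (t : ℝ)
    (ht0 : 0 ≤ t) (ht1 : t ≤ 1) :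
    ∃ (i : ℕ) (θ : ℝ), (i : ℝ) + 1 ≤ n ∧ 0 ≤ θ ∧ θ ≤ 1 ∧ (i : ℝ) + θ = n * t ∧
      ∀ ω, linearInterp β n t ω =
        β ((i : ℝ) / n) ω + θ * (β (((i : ℝ) + 1) / n) ω - β ((i : ℝ) / n) ω) := by
  have hn0 : (0 : ℝ) < n := by exact_mod_cast hn
  rcases eq_or_lt_of_le ht1 with h1 | h1
  · -- t = 1
    subst h1
    have hc : ((n - 1 : ℕ) : ℝ) = (n : ℝ) - 1 := by
      rw [Nat.cast_sub hn, Nat.cast_one]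
    refine ⟨n - 1, 1, ?_, zero_le_one, le_refl 1, ?_, ?_⟩
    · rw [hc]; linarith
    · rw [hc]; ring
    · intro ω
      have e1 : ⌊(n : ℝ) * 1⌋₊ = n := by rw [mul_one, Nat.floor_natCast]
      have e2 : (n : ℝ) - 1 + 1 = (n : ℝ) := by ring
      rw [linearInterp, e1, hc, e2]
      ring
  · -- t < 1
    refine ⟨⌊(n : ℝ) * t⌋₊, (n : ℝ) * t - ⌊(n : ℝ) * t⌋₊, ?_, ?_, ?_, by ring, fun ω => rfl⟩
    · have hlt : ⌊(n : ℝ) * t⌋₊ < n := by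
        rw [Nat.floor_lt (by positivity)]
        calc (n : ℝ) * t < n * 1 := by
              exact mul_lt_mul_of_pos_left h1 hn0
          _ = n := mul_one _
      have := Nat.succ_le_of_lt hlt
      exact_mod_cast this
    · exact sub_nonneg.2 (Nat.floor_le (by positivity))
    · have := Nat.lt_floor_add_one ((n : ℝ) * t)
      linarith

set_option maxHeartbeats 1000000 in
open scoped ENNReal NNReal in
/-- The Wong–Zakai linear interpolation `β^n` of a Brownian motion `β` with mesh `1/n`
satisfies the two conditions of the general convergence criterion (with `ν = 1`):
(i) `E[|β^n_t - β^n_s|^{2p}] ≤ C_p |t-s|^p` and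
(ii) `sup_{t∈[0,1]} E[|β^n_t - β_t|^{2p}] ≤ C_p n^{-p}`,
for a constant `C_p` depending only on `p`. -/
theorem wong_zakai_interpolation_bounds (p : ℕ) (hp : 1 ≤ p) :
    ∃ C : ℝ, ∀ (Ω : Type) (mΩ : MeasurableSpace Ω) (P : Measure Ω),
      IsProbabilityMeasure P →
      ∀ β : ℝ → Ω → ℝ, IsStdBrownianMotion P β →
        ∀ n : ℕ, 1 ≤ n →
          (∀ s t : ℝ, s ∈ Set.Icc (0 : ℝ) 1 → t ∈ Set.Icc (0 : ℝ) 1 →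
            ∫ ω, |linearInterp β n t ω - linearInterp β n s ω| ^ (2 * p) ∂P ≤
              C * |t - s| ^ p) ∧
          (∀ t : ℝ, t ∈ Set.Icc (0 : ℝ) 1 →
            ∫ ω, |linearInterp β n t ω - β t ω| ^ (2 * p) ∂P ≤
              C * ((n : ℝ) ^ p)⁻¹) := by
  refine ⟨((3 * gaussK p) ^ (2 * p)).toReal, ?_⟩
  intro Ω mΩ P hP β hβ n hn
  obtain ⟨hmeas, -, -, hlaw, -⟩ := hβ
  have hn0 : (0 : ℝ) < n := by exact_mod_cast hn
  have hq1 : (1 : ℝ≥0∞) ≤ ((2 * p : ℕ) : ℝ≥0∞) := by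
    exact_mod_cast (by omega : 1 ≤ 2 * p)
  have hK3 : gaussK p ≤ 3 * gaussK p := by
    nth_rewrite 1 [← one_mul (gaussK p)]
    exact mul_le_mul_left (by norm_num) _
  have hlinm : ∀ t : ℝ, Measurable (fun ω => linearInterp β n t ω) := fun t =>
    (hmeas _).add (((hmeas _).sub (hmeas _)).const_mul _)
  constructor
  · -- part (i)
    have key : ∀ s t : ℝ, s ∈ Set.Icc (0:ℝ) 1 → t ∈ Set.Icc (0:ℝ) 1 → s ≤ t →
        ∫ ω, |linearInterp β n t ω - linearInterp β n s ω| ^ (2 * p) ∂P ≤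
          ((3 * gaussK p) ^ (2 * p)).toReal * |t - s| ^ p := by
      intro s t hs ht hst
      have hts : (0:ℝ) ≤ t - s := sub_nonneg.2 hst
      rw [abs_of_nonneg hts]
      obtain ⟨i, σ, hi1, hσ0, hσ1, hiσ, hreps⟩ := aux_rep β n hn s hs.1 hs.2
      obtain ⟨j, θ, hj1, hθ0, hθ1, hjθ, hrept⟩ := aux_rep β n hn t ht.1 ht.2
      have hmono : (i:ℝ) + σ ≤ (j:ℝ) + θ := by
        rw [hiσ, hjθ]; exact mul_le_mul_of_nonneg_left hst hn0.le
      have hnts : (n:ℝ) * (t - s) = ((j:ℝ) + θ) - ((i:ℝ) + σ) := by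
        rw [mul_sub, ← hjθ, ← hiσ]
      have hfm : AEStronglyMeasurable
          (fun ω => linearInterp β n t ω - linearInterp β n s ω) P :=
        ((hlinm t).sub (hlinm s)).aestronglyMeasurable
      refine aux_main p hp hfm hts ?_
      rcases lt_trichotomy i j with hlt | heq | hgt
      · -- i < j : three increments
        have hij1 : (i:ℝ) + 1 ≤ (j:ℝ) := by exact_mod_cast hlt
        have hjn : (j:ℝ) ≤ n := by linarith
        have hD : (fun ω => linearInterp β n t ω - linearInterp β n s ω) =
            (fun ω => (1 - σ) * (β (((i:ℝ)+1)/n) ω - β ((i:ℝ)/n) ω)) +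
            ((fun ω => 1 * (β ((j:ℝ)/n) ω - β (((i:ℝ)+1)/n) ω)) +
             (fun ω => θ * (β (((j:ℝ)+1)/n) ω - β ((j:ℝ)/n) ω))) := by
          funext ω
          simp only [Pi.add_apply]
          rw [hrept ω, hreps ω]; ring
        rw [hD]
        have hm1 : AEStronglyMeasurable
            (fun ω => (1 - σ) * (β (((i:ℝ)+1)/n) ω - β ((i:ℝ)/n) ω)) P :=
          (((hmeas _).sub (hmeas _)).const_mul _).aestronglyMeasurable
        have hm2 : AEStronglyMeasurable
            (fun ω => 1 * (β ((j:ℝ)/n) ω - β (((i:ℝ)+1)/n) ω)) P :=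
          (((hmeas _).sub (hmeas _)).const_mul _).aestronglyMeasurable
        have hm3 : AEStronglyMeasurable
            (fun ω => θ * (β (((j:ℝ)+1)/n) ω - β ((j:ℝ)/n) ω)) P :=
          (((hmeas _).sub (hmeas _)).const_mul _).aestronglyMeasurable
        have hfrac1 : ((i:ℝ)+1)/n - (i:ℝ)/n = 1/n := by field_simp; ring
        have hfrac2 : ((j:ℝ)+1)/n - (j:ℝ)/n = 1/n := by field_simp; ring
        have hb1 : eLpNorm (fun ω => (1 - σ) * (β (((i:ℝ)+1)/n) ω - β ((i:ℝ)/n) ω))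
            ((2 * p : ℕ) : ℝ≥0∞) P ≤ ENNReal.ofReal (Real.sqrt (t - s)) * gaussK p := by
          refine aux_incr hmeas hlaw p _ _ _ _ (by positivity) ?_ ?_ ?_
          · gcongr <;> linarith
          · rw [div_le_one hn0]; exact hi1
          · rw [hfrac1, mul_one_div, div_le_iff₀ hn0]
            nlinarith [hnts, mul_nonneg (sub_nonneg.2 hσ1) hσ0, hθ0, hij1]
        have hb2 : eLpNorm (fun ω => 1 * (β ((j:ℝ)/n) ω - β (((i:ℝ)+1)/n) ω))
            ((2 * p : ℕ) : ℝ≥0∞) P ≤ ENNReal.ofReal (Real.sqrt (t - s)) * gaussK p := by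
          refine aux_incr hmeas hlaw p _ _ _ _ (by positivity) ?_ ?_ ?_
          · gcongr <;> linarith
          · rw [div_le_one hn0]; exact hjn
          · rw [one_pow, one_mul, div_sub_div_same, div_le_iff₀ hn0]
            nlinarith [hnts, hθ0, hσ1]
        have hb3 : eLpNorm (fun ω => θ * (β (((j:ℝ)+1)/n) ω - β ((j:ℝ)/n) ω))
            ((2 * p : ℕ) : ℝ≥0∞) P ≤ ENNReal.ofReal (Real.sqrt (t - s)) * gaussK p := by
          refine aux_incr hmeas hlaw p _ _ _ _ (by positivity) ?_ ?_ ?_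
          · gcongr <;> linarith
          · rw [div_le_one hn0]; exact hj1
          · rw [hfrac2, mul_one_div, div_le_iff₀ hn0]
            nlinarith [hnts, mul_nonneg hθ0 (sub_nonneg.2 hθ1), hij1, hσ1]
        calc eLpNorm _ ((2 * p : ℕ) : ℝ≥0∞) P
            ≤ eLpNorm (fun ω => (1 - σ) * (β (((i:ℝ)+1)/n) ω - β ((i:ℝ)/n) ω))
                ((2 * p : ℕ) : ℝ≥0∞) P +
              eLpNorm ((fun ω => 1 * (β ((j:ℝ)/n) ω - β (((i:ℝ)+1)/n) ω)) +
                (fun ω => θ * (β (((j:ℝ)+1)/n) ω - β ((j:ℝ)/n) ω)))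
                ((2 * p : ℕ) : ℝ≥0∞) P := eLpNorm_add_le hm1 (hm2.add hm3) hq1
          _ ≤ eLpNorm (fun ω => (1 - σ) * (β (((i:ℝ)+1)/n) ω - β ((i:ℝ)/n) ω))
                ((2 * p : ℕ) : ℝ≥0∞) P +
              (eLpNorm (fun ω => 1 * (β ((j:ℝ)/n) ω - β (((i:ℝ)+1)/n) ω))
                ((2 * p : ℕ) : ℝ≥0∞) P +
               eLpNorm (fun ω => θ * (β (((j:ℝ)+1)/n) ω - β ((j:ℝ)/n) ω))
                ((2 * p : ℕ) : ℝ≥0∞) P) :=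
              add_le_add_right (eLpNorm_add_le hm2 hm3 hq1) _
          _ ≤ ENNReal.ofReal (Real.sqrt (t - s)) * gaussK p +
              (ENNReal.ofReal (Real.sqrt (t - s)) * gaussK p +
               ENNReal.ofReal (Real.sqrt (t - s)) * gaussK p) :=
              add_le_add hb1 (add_le_add hb2 hb3)
          _ = ENNReal.ofReal (Real.sqrt (t - s)) * (3 * gaussK p) := by ring
      · -- i = j : one increment
        subst heq
        have hθσ : (0:ℝ) ≤ θ - σ := by linarith
        have hD : (fun ω => linearInterp β n t ω - linearInterp β n s ω) =
            fun ω => (θ - σ) * (β (((i:ℝ)+1)/n) ω - β ((i:ℝ)/n) ω) := by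
          funext ω
          rw [hrept ω, hreps ω]; ring
        rw [hD]
        have hfrac1 : ((i:ℝ)+1)/n - (i:ℝ)/n = 1/n := by field_simp; ring
        have hb1 : eLpNorm (fun ω => (θ - σ) * (β (((i:ℝ)+1)/n) ω - β ((i:ℝ)/n) ω))
            ((2 * p : ℕ) : ℝ≥0∞) P ≤ ENNReal.ofReal (Real.sqrt (t - s)) * gaussK p := by
          refine aux_incr hmeas hlaw p _ _ _ _ (by positivity) ?_ ?_ ?_
          · gcongr <;> linarith
          · rw [div_le_one hn0]; exact hi1
          · rw [hfrac1, mul_one_div, div_le_iff₀ hn0]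
            nlinarith [hnts, mul_nonneg hθσ (show (0:ℝ) ≤ 1 - (θ - σ) by linarith)]
        exact le_trans hb1 (mul_le_mul_right hK3 _)
      · -- i > j : degenerate case, the difference vanishes
        have hji1 : (j:ℝ) + 1 ≤ (i:ℝ) := by exact_mod_cast hgt
        have hσz : σ = 0 := by linarith
        have hθ1' : θ = 1 := by linarith
        have hij : (i:ℝ) = (j:ℝ) + 1 := by linarith
        have hD : (fun ω => linearInterp β n t ω - linearInterp β n s ω) = 0 := by
          funext ω
          rw [hrept ω, hreps ω, hσz, hθ1', hij]
          simp only [Pi.zero_apply]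
          ring
        rw [hD, eLpNorm_zero]
        exact zero_le
    intro s t hs ht
    rcases le_total s t with h | h
    · exact key s t hs ht h
    · have hk := key t s ht hs h
      have e1 : ∀ ω : Ω, |linearInterp β n t ω - linearInterp β n s ω| ^ (2*p)
          = |linearInterp β n s ω - linearInterp β n t ω| ^ (2*p) := fun ω => by
        rw [abs_sub_comm]
      calc ∫ ω, |linearInterp β n t ω - linearInterp β n s ω| ^ (2 * p) ∂P
          = ∫ ω, |linearInterp β n s ω - linearInterp β n t ω| ^ (2 * p) ∂P :=
            integral_congr_ae (Filter.Eventually.of_forall e1)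
        _ ≤ ((3 * gaussK p) ^ (2 * p)).toReal * |s - t| ^ p := hk
        _ = ((3 * gaussK p) ^ (2 * p)).toReal * |t - s| ^ p := by rw [abs_sub_comm]
  · -- part (ii)
    intro t ht
    obtain ⟨i, θ, hi1, hθ0, hθ1, hit, hrept⟩ := aux_rep β n hn t ht.1 ht.2
    have hfm : AEStronglyMeasurable (fun ω => linearInterp β n t ω - β t ω) P :=
      ((hlinm t).sub (hmeas t)).aestronglyMeasurable
    have hrn : (0:ℝ) ≤ (n:ℝ)⁻¹ := by positivity
    have hia : (i:ℝ)/n ≤ t := by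
      rw [div_le_iff₀ hn0]
      linarith [hit, hθ0]
    have hfrac1 : ((i:ℝ)+1)/n - (i:ℝ)/n = (n:ℝ)⁻¹ := by field_simp; ring
    have hub : t ≤ ((i:ℝ)+1)/n := by
      rw [le_div_iff₀ hn0]
      linarith [hit, hθ1]
    have hD : (fun ω => linearInterp β n t ω - β t ω) =
        (fun ω => (-1) * (β t ω - β ((i:ℝ)/n) ω)) +
        (fun ω => θ * (β (((i:ℝ)+1)/n) ω - β ((i:ℝ)/n) ω)) := by
      funext ω
      simp only [Pi.add_apply]
      rw [hrept ω]; ring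
    have hm1 : AEStronglyMeasurable (fun ω => (-1) * (β t ω - β ((i:ℝ)/n) ω)) P :=
      (((hmeas _).sub (hmeas _)).const_mul _).aestronglyMeasurable
    have hm2 : AEStronglyMeasurable
        (fun ω => θ * (β (((i:ℝ)+1)/n) ω - β ((i:ℝ)/n) ω)) P :=
      (((hmeas _).sub (hmeas _)).const_mul _).aestronglyMeasurable
    have hb1 : eLpNorm (fun ω => (-1) * (β t ω - β ((i:ℝ)/n) ω)) ((2 * p : ℕ) : ℝ≥0∞) P ≤
        ENNReal.ofReal (Real.sqrt ((n:ℝ)⁻¹)) * gaussK p := by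
      refine aux_incr hmeas hlaw p _ _ _ _ (by positivity) hia ht.2 ?_
      rw [neg_one_sq, one_mul]
      linarith [hub, hfrac1, hia]
    have hb2 : eLpNorm (fun ω => θ * (β (((i:ℝ)+1)/n) ω - β ((i:ℝ)/n) ω))
        ((2 * p : ℕ) : ℝ≥0∞) P ≤ ENNReal.ofReal (Real.sqrt ((n:ℝ)⁻¹)) * gaussK p := by
      refine aux_incr hmeas hlaw p _ _ _ _ (by positivity) ?_ ?_ ?_
      · gcongr <;> linarith
      · rw [div_le_one hn0]; exact hi1
      · rw [hfrac1]
        nlinarith [mul_nonneg (mul_nonneg hθ0 hθ0) hrn, hrn,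
          mul_nonneg (mul_nonneg hθ0 (sub_nonneg.2 hθ1)) hrn]
    have hsum : eLpNorm (fun ω => linearInterp β n t ω - β t ω) ((2 * p : ℕ) : ℝ≥0∞) P ≤
        ENNReal.ofReal (Real.sqrt ((n:ℝ)⁻¹)) * (3 * gaussK p) := by
      rw [hD]
      calc eLpNorm _ ((2 * p : ℕ) : ℝ≥0∞) P
          ≤ eLpNorm (fun ω => (-1) * (β t ω - β ((i:ℝ)/n) ω)) ((2 * p : ℕ) : ℝ≥0∞) P +
            eLpNorm (fun ω => θ * (β (((i:ℝ)+1)/n) ω - β ((i:ℝ)/n) ω))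
              ((2 * p : ℕ) : ℝ≥0∞) P := eLpNorm_add_le hm1 hm2 hq1
        _ ≤ ENNReal.ofReal (Real.sqrt ((n:ℝ)⁻¹)) * gaussK p +
            ENNReal.ofReal (Real.sqrt ((n:ℝ)⁻¹)) * gaussK p := add_le_add hb1 hb2
        _ = ENNReal.ofReal (Real.sqrt ((n:ℝ)⁻¹)) * (2 * gaussK p) := by ring
        _ ≤ ENNReal.ofReal (Real.sqrt ((n:ℝ)⁻¹)) * (3 * gaussK p) :=
            mul_le_mul_right (mul_le_mul_left (by norm_num) _) _
    have hmain := aux_main p hp hfm hrn hsum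
    rw [inv_pow] at hmain
    exact hmain
end

section
/- Let B be a Banach space and (S_t)_{t≥0} a semigroup of bounded linear operators on B (S_0 = Id, S_{t+t'} = S_t ∘ S_{t'}) satisfying the contraction bound ‖S_t x‖ ≤ ‖x‖ for all t ≥ 0 and x ∈ B. Let z be a B-valued function on the simplex {(s,t) : 0 ≤ s ≤ t ≤ T} such that z_{ts} = z_{tu} + S_{t−u} z_{us} for all 0 ≤ s ≤ u ≤ t ≤ T, and suppose there exist c ≥ 0 and μ > 1 with ‖z_{ts}‖ ≤ c |t−s|^μ for all s ≤ t. Then z_{ts} = 0 for all 0 ≤ s ≤ t ≤ T. -/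
/-- If `(S_t)_{t≥0}` is a contraction semigroup of bounded linear operators on a Banach
space `B` and `z` is a `B`-valued function on the simplex `{0 ≤ s ≤ t ≤ T}` satisfying the
additivity property `z_{ts} = z_{tu} + S_{t-u} z_{us}` together with a Hölder-type bound
`‖z_{ts}‖ ≤ c |t-s|^μ` of order `μ > 1`, then `z` vanishes identically. -/
theorem twisted_additive_holder_vanishes
    (B : Type*) [NormedAddCommGroup B] [NormedSpace ℝ B] [CompleteSpace B]
    (T : ℝ) (hT : 0 ≤ T)
    (S : ℝ → B →L[ℝ] B)
    (hS0 : S 0 = ContinuousLinearMap.id ℝ B)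
    (hSadd : ∀ t t' : ℝ, 0 ≤ t → 0 ≤ t' → S (t + t') = (S t).comp (S t'))
    (hScontr : ∀ (t : ℝ) (x : B), 0 ≤ t → ‖S t x‖ ≤ ‖x‖)
    (z : ℝ → ℝ → B)
    (hadd : ∀ s u t : ℝ, 0 ≤ s → s ≤ u → u ≤ t → t ≤ T →
      z t s = z t u + S (t - u) (z u s))
    (c : ℝ) (hc : 0 ≤ c) (μ : ℝ) (hμ : 1 < μ)
    (hbound : ∀ s t : ℝ, 0 ≤ s → s ≤ t → t ≤ T → ‖z t s‖ ≤ c * |t - s| ^ μ) :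
    ∀ s t : ℝ, 0 ≤ s → s ≤ t → t ≤ T → z t s = 0 := by
  -- Key: iterated splitting bound
  have key : ∀ n : ℕ, ∀ s t : ℝ, 0 ≤ s → s ≤ t → t ≤ T →
      ‖z t s‖ ≤ ((n : ℝ) + 1) * (c * ((t - s) / ((n : ℝ) + 1)) ^ μ) := by
    intro n
    induction n with
    | zero =>
      intro s t hs hst htT
      simpa [abs_of_nonneg (sub_nonneg.2 hst)] using hbound s t hs hst htT
    | succ n ih =>
      intro s t hs hst htT
      set h := (t - s) / ((n : ℝ) + 2) with hh_def
      have hn2 : (0 : ℝ) < (n : ℝ) + 2 := by positivity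
      have hh : 0 ≤ h := div_nonneg (sub_nonneg.2 hst) hn2.le
      set u := s + h with hu_def
      have hsu : s ≤ u := le_add_of_nonneg_right hh
      have htu : t - u = ((n : ℝ) + 1) * h := by
        have : t - s = ((n : ℝ) + 2) * h := by
          rw [hh_def]; field_simp [hn2.ne']
        rw [hu_def]; linarith
      have hut : u ≤ t := by nlinarith
      have htu0 : 0 ≤ t - u := by linarith
      have hus : u - s = h := by rw [hu_def]; ring
      rw [hadd s u t hs hsu hut htT]
      have hn1 : ((n : ℝ) + 1) ≠ 0 := by positivity
      have hts : (t - s) / ((n : ℝ) + 1 + 1) = h := by rw [hh_def]; ring_nf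
      have htu' : (t - u) / ((n : ℝ) + 1) = h := by
        rw [htu, mul_comm, mul_div_assoc, div_self hn1, mul_one]
      push_cast
      rw [hts]
      calc ‖z t u + (S (t - u)) (z u s)‖
          ≤ ‖z t u‖ + ‖(S (t - u)) (z u s)‖ := norm_add_le _ _
        _ ≤ ‖z t u‖ + ‖z u s‖ := by
            gcongr
            exact hScontr _ _ htu0
        _ ≤ ((n : ℝ) + 1) * (c * ((t - u) / ((n : ℝ) + 1)) ^ μ)
              + c * |u - s| ^ μ := by
            gcongr
            · exact ih u t (hs.trans hsu) hut htT
            · exact hbound s u hs hsu (hut.trans htT)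
        _ = ((n : ℝ) + 1 + 1) * (c * h ^ μ) := by
            rw [htu', hus, abs_of_nonneg hh]
            ring
  intro s t hs hst htT
  set a := t - s with ha_def
  have ha : 0 ≤ a := sub_nonneg.2 hst
  -- the bound tends to 0
  have heq : ∀ n : ℕ, ((n : ℝ) + 1) * (c * (a / ((n : ℝ) + 1)) ^ μ)
      = c * a ^ μ * ((n : ℝ) + 1) ^ (1 - μ) := by
    intro n
    have hn : (0 : ℝ) < (n : ℝ) + 1 := by positivity
    rw [Real.div_rpow ha hn.le, Real.rpow_sub hn, Real.rpow_one]
    field_simp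
  have htend : Filter.Tendsto (fun n : ℕ => c * a ^ μ * ((n : ℝ) + 1) ^ (1 - μ))
      Filter.atTop (nhds 0) := by
    have h1 : Filter.Tendsto (fun n : ℕ => ((n : ℝ) + 1)) Filter.atTop Filter.atTop :=
      Filter.tendsto_atTop_add_const_right _ 1 tendsto_natCast_atTop_atTop
    have h2 : Filter.Tendsto (fun x : ℝ => x ^ (1 - μ)) Filter.atTop (nhds 0) := by
      have := tendsto_rpow_neg_atTop (y := μ - 1) (by linarith)
      simpa [neg_sub] using this
    have := (h2.comp h1).const_mul (c * a ^ μ)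
    simpa using this
  have hle : ‖z t s‖ ≤ 0 := by
    refine ge_of_tendsto' htend fun n => ?_
    rw [← heq n]
    exact key n s t hs hst htT
  exact norm_le_zero_iff.mp hle
end
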